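/- arXiv:1901.09212 — 10 statements merged into one kernel-verified Lean document; each statement's English description precedes it below -/
import Mathlib

section
/- Let a be an integer, f : ℤ → ℝ, and R > 0 be such that for every r with 0 < r < R the series ∑_{k=1}^∞ r^{k-1} |f(k+a)| converges. Define the nabla Laplace transform F(s) = ∑_{k=1}^∞ (1-s)^{k-1} f(k+a) for complex s with |1-s| < R. Then for every integer m ≥ 1 and every r with 0 < r < R, one has f(a+m) = (1/(2π)) ∫_{-π}^{π} F(1 - r e^{-iθ}) (r e^{-iθ})^{1-m} dθ. (This is the inverse nabla Laplace transform formula, with the clockwise contour around the point 1 parameterized as s = 1 - r e^{-iθ}.) -/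
open MeasureTheory Complex

lemma exp_integral_aux (p : ℤ) :
    (∫ θ in (-Real.pi)..Real.pi, Complex.exp ((-(p : ℂ) * Complex.I) * θ))
      = if p = 0 then (2 * Real.pi : ℂ) else 0 := by
  rcases eq_or_ne p 0 with rfl | hp
  · have : ∀ θ : ℝ, Complex.exp ((-(0 : ℤ) : ℂ) * Complex.I * θ) = 1 := by
      intro θ; simp
    simp only [this, intervalIntegral.integral_const, smul_eq_mul, mul_one]
    rw [Complex.real_smul]
    push_cast
    ring
  · rw [if_neg hp, integral_exp_mul_complex (by simpa using hp : (-(p : ℂ) * Complex.I) ≠ 0)]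
    have : Complex.exp (-(p : ℂ) * Complex.I * (Real.pi : ℂ))
        = Complex.exp (-(p : ℂ) * Complex.I * ((-Real.pi : ℝ) : ℂ)) := by
      rw [Complex.exp_eq_exp_iff_exists_int]
      exact ⟨-p, by push_cast; ring⟩
    rw [this, sub_self, zero_div]


/-- **Inverse nabla Laplace transform.**
If `F(s) = ∑_{k=1}^∞ (1-s)^{k-1} f(k+a)` (the nabla Laplace transform of `f` about the
initial instant `a`), defined for `|1-s| < R`, then for every integer `m ≥ 1` and every
`0 < r < R`,
`f(a+m) = (1/(2π)) ∫_{-π}^{π} F(1 - r e^{-iθ}) (r e^{-iθ})^{1-m} dθ`. -/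
theorem inverse_nabla_laplace_transform
    (a : ℤ) (f : ℤ → ℝ) (R : ℝ) (hR : 0 < R)
    (hconv : ∀ r : ℝ, 0 < r → r < R →
      Summable (fun k : ℕ => r ^ k * |f (a + (k : ℤ) + 1)|))
    (F : ℂ → ℂ)
    (hF : ∀ s : ℂ, ‖1 - s‖ < R →
      F s = ∑' k : ℕ, (1 - s) ^ k * (f (a + (k : ℤ) + 1) : ℂ))
    (m : ℤ) (hm : 1 ≤ m) (r : ℝ) (hr0 : 0 < r) (hrR : r < R) :
    (f (a + m) : ℂ) =
      (1 / (2 * Real.pi)) *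
        ∫ θ in (-Real.pi)..Real.pi,
          F (1 - (r : ℂ) * Complex.exp (-(Complex.I * (θ : ℂ)))) *
            ((r : ℂ) * Complex.exp (-(Complex.I * (θ : ℂ)))) ^ ((1 : ℤ) - m) := by
  have hπ : (0:ℝ) < Real.pi := Real.pi_pos
  set n : ℕ := (m - 1).toNat with hndef
  have hnm : (n : ℤ) = m - 1 := Int.toNat_of_nonneg (by omega)
  -- the moving point on the circle
  set z : ℝ → ℂ := fun θ => (r : ℂ) * Complex.exp (-(Complex.I * (θ : ℂ))) with hzdef
  have hzne : ∀ θ : ℝ, z θ ≠ 0 := fun θ =>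
    mul_ne_zero (by exact_mod_cast hr0.ne') (Complex.exp_ne_zero _)
  have habs : ∀ θ : ℝ, ‖z θ‖ = r := by
    intro θ
    simp [hzdef, Complex.norm_exp, abs_of_pos hr0]
  -- the term functions
  set g : ℕ → ℝ → ℂ := fun k θ =>
    (f (a + (k : ℤ) + 1) : ℂ) *
      ((r : ℝ) ^ ((k : ℤ) - (n : ℤ)) *
        Complex.exp ((-(((k : ℤ) - (n : ℤ) : ℤ) : ℂ) * Complex.I) * θ)) with hgdef
  -- pointwise identity: integrand = ∑' k, g k θ
  have hpt : ∀ θ : ℝ, F (1 - z θ) * (z θ) ^ ((1 : ℤ) - m) = ∑' k : ℕ, g k θ := by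
    intro θ
    have h1 : ‖1 - (1 - z θ)‖ < R := by
      simpa [habs θ] using hrR
    rw [hF _ h1]
    have h2 : (1 : ℂ) - (1 - z θ) = z θ := by ring
    rw [h2, ← tsum_mul_right]
    congr 1
    funext k
    have hzp : (z θ) ^ (k : ℕ) * (f (a + (k : ℤ) + 1) : ℂ) * (z θ) ^ ((1 : ℤ) - m)
        = (f (a + (k : ℤ) + 1) : ℂ) * (z θ) ^ ((k : ℤ) - (n : ℤ)) := by
      rw [← zpow_natCast (z θ) k, mul_comm ((z θ) ^ (k : ℤ)) _, mul_assoc,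
        ← zpow_add₀ (hzne θ)]
      congr 2
      omega
    rw [hzp]
    have hexp : Complex.exp (-(Complex.I * (θ : ℂ))) ^ ((k : ℤ) - (n : ℤ))
        = Complex.exp ((-(((k : ℤ) - (n : ℤ) : ℤ) : ℂ) * Complex.I) * θ) := by
      rw [← Complex.exp_int_mul]
      congr 1
      push_cast
      try ring
    rw [hgdef]
    simp only [hzdef]
    rw [mul_zpow, hexp]
  -- norm of terms
  have hnorm : ∀ k θ, ‖g k θ‖ = |f (a + (k : ℤ) + 1)| * r ^ ((k : ℤ) - (n : ℤ)) := by
    intro k θ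
    rw [hgdef]
    simp only [norm_mul, Complex.norm_real, Real.norm_eq_abs,
      Complex.norm_exp]
    have : ((-(((k : ℤ) - (n : ℤ) : ℤ) : ℂ) * Complex.I) * θ).re = 0 := by
      simp
    rw [this, Real.exp_zero, mul_one, Complex.norm_zpow, Complex.norm_real, Real.norm_eq_abs,
      abs_of_pos hr0]
  -- integrability
  have hcont : ∀ k, Continuous (g k) := by
    intro k
    apply Continuous.mul continuous_const
    apply Continuous.mul continuous_const
    exact Complex.continuous_exp.comp (by fun_prop)
  have hInt : ∀ k, Integrable (g k) (volume.restrict (Set.Ioc (-Real.pi) Real.pi)) := by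
    intro k
    exact ((hcont k).integrableOn_Ioc (a := -Real.pi) (b := Real.pi))
  -- summability of the integrals of the norms
  have hsum : Summable (fun k : ℕ =>
      ∫ θ, ‖g k θ‖ ∂(volume.restrict (Set.Ioc (-Real.pi) Real.pi))) := by
    have heq : ∀ k : ℕ, (∫ θ, ‖g k θ‖ ∂(volume.restrict (Set.Ioc (-Real.pi) Real.pi)))
        = (r ^ (k : ℕ) * |f (a + (k : ℤ) + 1)|) * (r ^ (-(n : ℤ)) * (2 * Real.pi)) := by
      intro k
      simp_rw [hnorm k]
      rw [MeasureTheory.integral_const, measureReal_def, Measure.restrict_apply_univ, Real.volume_Ioc,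
        ENNReal.toReal_ofReal (by linarith), smul_eq_mul]
      rw [zpow_sub₀ hr0.ne', zpow_natCast, zpow_neg, zpow_natCast]
      ring
    rw [funext heq]
    exact (hconv r hr0 hrR).mul_right _
  -- swap sum and integral
  have hswap : ∑' k : ℕ, (∫ θ in Set.Ioc (-Real.pi) Real.pi, g k θ)
      = ∫ θ in Set.Ioc (-Real.pi) Real.pi, ∑' k : ℕ, g k θ :=
    MeasureTheory.integral_tsum_of_summable_integral_norm hInt hsum
  -- value of each integral
  have hval : ∀ k : ℕ, (∫ θ in Set.Ioc (-Real.pi) Real.pi, g k θ)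
      = if k = n then (f (a + (n : ℤ) + 1) : ℂ) * (2 * Real.pi) else 0 := by
    intro k
    rw [← intervalIntegral.integral_of_le (by linarith)]
    rw [hgdef]
    simp only
    rw [intervalIntegral.integral_const_mul, intervalIntegral.integral_const_mul,
      exp_integral_aux ((k : ℤ) - (n : ℤ))]
    rcases eq_or_ne k n with rfl | hk
    · rw [if_pos (by omega), if_pos rfl]
      simp
    · rw [if_neg (by omega), if_neg hk, mul_zero, mul_zero]
  -- put everything together
  have hmain : (∫ θ in (-Real.pi)..Real.pi,
        F (1 - z θ) * (z θ) ^ ((1 : ℤ) - m))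
      = (f (a + (n : ℤ) + 1) : ℂ) * (2 * Real.pi) := by
    rw [intervalIntegral.integral_of_le (by linarith)]
    rw [show (fun θ => F (1 - z θ) * (z θ) ^ ((1 : ℤ) - m)) = fun θ => ∑' k : ℕ, g k θ from
      funext hpt]
    rw [← hswap]
    rw [tsum_eq_single n (fun k hk => by rw [hval k, if_neg hk])]
    rw [hval n, if_pos rfl]
  have hgoal : F ∘ (fun θ : ℝ => 1 - z θ) = F ∘ (fun θ : ℝ => 1 - z θ) := rfl
  have ham : a + m = a + (n : ℤ) + 1 := by omega
  rw [ham]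
  have h2pi : (2 * (Real.pi : ℂ)) ≠ 0 := by
    simp [Real.pi_ne_zero]
  calc (f (a + (n : ℤ) + 1) : ℂ)
      = (1 / (2 * (Real.pi : ℂ))) * ((f (a + (n : ℤ) + 1) : ℂ) * (2 * Real.pi)) := by
        rw [one_div, mul_comm, mul_assoc, mul_inv_cancel₀ h2pi, mul_one]
    _ = (1 / (2 * Real.pi)) *
        ∫ θ in (-Real.pi)..Real.pi, F (1 - z θ) * (z θ) ^ ((1 : ℤ) - m) := by
        rw [hmain]
end

section
/- Let a be an integer, f : ℤ → ℝ, and R > 0 be such that for every r with 0 < r < R the series ∑_{k=1}^∞ r^{k-1} |f(k+a)| converges, and let F(s) = ∑_{k=1}^∞ (1-s)^{k-1} f(k+a) for |1-s| < R. Then for every integer κ ≥ 1, the function s ↦ (F(s) − ∑_{k=1}^{κ-1} (1-s)^{k-1} f(a+k)) / (1-s)^{κ-1} tends to f(a+κ) as the complex variable s tends to 1 with s ≠ 1. -/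
/-- Recovering the values of `f` from its nabla Laplace transform
`F(s) = ∑_{k=1}^∞ (1-s)^{k-1} f(k+a)` (defined for `|1-s| < R`): for every integer `κ ≥ 1`,
`(F(s) − ∑_{k=1}^{κ-1} (1-s)^{k-1} f(a+k)) / (1-s)^{κ-1} → f(a+κ)` as `s → 1`, `s ≠ 1`. -/
theorem nabla_laplace_value_recovery
    (a : ℤ) (f : ℤ → ℝ) (R : ℝ) (hR : 0 < R)
    (hconv : ∀ r : ℝ, 0 < r → r < R →
      Summable (fun k : ℕ => r ^ k * |f (a + (k : ℤ) + 1)|))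
    (F : ℂ → ℂ)
    (hF : ∀ s : ℂ, ‖1 - s‖ < R →
      F s = ∑' k : ℕ, (1 - s) ^ k * (f (a + (k : ℤ) + 1) : ℂ))
    (κ : ℕ) (hκ : 1 ≤ κ) :
    Filter.Tendsto
      (fun s : ℂ =>
        (F s - ∑ k ∈ Finset.range (κ - 1), (1 - s) ^ k * (f (a + (k : ℤ) + 1) : ℂ)) /
          (1 - s) ^ (κ - 1))
      (nhdsWithin 1 {(1 : ℂ)}ᶜ) (nhds ((f (a + (κ : ℤ)) : ℝ) : ℂ)) := by
  set m := κ - 1 with hm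
  set c : ℕ → ℂ := fun k => (f (a + (k : ℤ) + 1) : ℂ) with hc
  set r0 : ℝ := R / 2 with hr0def
  have hr0pos : 0 < r0 := by positivity
  have hr0R : r0 < R := by simp only [hr0def]; linarith
  have hS : Summable (fun k : ℕ => r0 ^ k * |f (a + (k : ℤ) + 1)|) := hconv r0 hr0pos hr0R
  -- shifted real summability
  have hSshift : ∀ j : ℕ, Summable (fun k : ℕ => r0 ^ k * |f (a + ((k + j : ℕ) : ℤ) + 1)|) := by
    intro j
    have h1 : Summable (fun k : ℕ => r0 ^ (k + j) * |f (a + ((k + j : ℕ) : ℤ) + 1)|) :=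
      (summable_nat_add_iff j).2 hS
    refine (h1.mul_left (r0 ^ j)⁻¹).congr fun k => ?_
    field_simp [pow_add]
    ring
  -- complex summability for |z| ≤ r0
  have hCsum : ∀ (j : ℕ) (z : ℂ), ‖z‖ ≤ r0 →
      Summable (fun k : ℕ => z ^ k * c (k + j)) := by
    intro j z hz
    refine Summable.of_norm_bounded (hSshift j) fun k => ?_
    simp only [norm_mul, norm_pow, hc, Complex.norm_real, Real.norm_eq_abs]
    gcongr
  set M : ℝ := ∑' k : ℕ, r0 ^ k * |f (a + ((k + (m + 1) : ℕ) : ℤ) + 1)| with hM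
  -- the key pointwise identity and bound
  have key : ∀ s : ℂ, ‖1 - s‖ < r0 → s ≠ 1 →
      ‖(F s - ∑ k ∈ Finset.range m, (1 - s) ^ k * c k) / (1 - s) ^ m - c m‖
        ≤ ‖1 - s‖ * M := by
    intro s hlt hs
    set z : ℂ := 1 - s with hz
    have hzne : z ≠ 0 := sub_ne_zero.2 (Ne.symm hs)
    have hzle : ‖z‖ ≤ r0 := hlt.le
    have hFs : F s = ∑' k : ℕ, z ^ k * c k := hF s (hlt.trans hr0R)
    have hsum0 : Summable (fun k : ℕ => z ^ k * c k) := by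
      simpa using hCsum 0 z hzle
    have hsplit : (∑ k ∈ Finset.range m, z ^ k * c k) + ∑' k : ℕ, z ^ (k + m) * c (k + m)
        = ∑' k : ℕ, z ^ k * c k := Summable.sum_add_tsum_nat_add m hsum0
    have htail : (∑' k : ℕ, z ^ (k + m) * c (k + m))
        = z ^ m * ∑' k : ℕ, z ^ k * c (k + m) := by
      rw [← tsum_mul_left]
      exact tsum_congr fun k => by ring
    have hquot : (F s - ∑ k ∈ Finset.range m, z ^ k * c k) / z ^ m
        = ∑' k : ℕ, z ^ k * c (k + m) := by
      rw [hFs, ← hsplit, htail]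
      field_simp
      ring
    have hsplit2 : (∑' k : ℕ, z ^ k * c (k + m))
        = c m + z * ∑' k : ℕ, z ^ k * c (k + (m + 1)) := by
      rw [Summable.tsum_eq_zero_add (hCsum m z hzle), ← tsum_mul_left]
      congr 1
      · simp
      · exact tsum_congr fun k => by rw [show k + 1 + m = k + (m + 1) by ring]; ring
    have hbound : ‖∑' k : ℕ, z ^ k * c (k + (m + 1))‖ ≤ M := by
      refine tsum_of_norm_bounded (hSshift (m + 1)).hasSum fun k => ?_
      simp only [norm_mul, norm_pow, hc, Complex.norm_real, Real.norm_eq_abs]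
      gcongr
    rw [hquot, hsplit2]
    simp only [add_sub_cancel_left, norm_mul]
    gcongr
  -- identify the target value
  have hcm : ((f (a + (κ : ℤ)) : ℝ) : ℂ) = c m := by
    simp only [hc]
    norm_cast
    congr 1
    omega
  rw [hcm, show (nhds (c m)) = nhds (c m) from rfl]
  rw [tendsto_iff_norm_sub_tendsto_zero]
  have hev : ∀ᶠ s : ℂ in nhdsWithin 1 {(1 : ℂ)}ᶜ,
      ‖(F s - ∑ k ∈ Finset.range m, (1 - s) ^ k * c k) / (1 - s) ^ m - c m‖
        ≤ ‖1 - s‖ * M := by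
    have hmem : {s : ℂ | ‖1 - s‖ < r0} ∈ nhdsWithin 1 {(1 : ℂ)}ᶜ := by
      apply nhdsWithin_le_nhds
      have : Continuous fun s : ℂ => ‖1 - s‖ :=
        (continuous_const.sub continuous_id).norm
      have h0 : ‖1 - (1 : ℂ)‖ < r0 := by simpa using hr0pos
      exact this.continuousAt.preimage_mem_nhds (Iio_mem_nhds h0)
    filter_upwards [hmem, self_mem_nhdsWithin] with s hs hs1
    exact key s hs hs1
  refine squeeze_zero' (Filter.Eventually.of_forall fun s => norm_nonneg _) hev ?_
  have h1 : Filter.Tendsto (fun s : ℂ => ‖1 - s‖ * M)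
      (nhdsWithin 1 {(1 : ℂ)}ᶜ) (nhds (‖(1 : ℂ) - 1‖ * M)) := by
    exact ((((continuous_const.sub continuous_id).norm).tendsto 1).mono_left
      nhdsWithin_le_nhds).mul_const M
  simpa using h1
end

section
/- Let a be an integer and f, g : ℤ → ℝ be such that for some r > 0 the series ∑_{k=1}^∞ r^{k-1} |f(k+a)| and ∑_{k=1}^∞ r^{k-1} |g(k+a)| converge. If ∑_{k=1}^∞ (1-s)^{k-1} f(k+a) = ∑_{k=1}^∞ (1-s)^{k-1} g(k+a) for every complex s with |1-s| < r, then f(k) = g(k) for every integer k ≥ a+1. (Uniqueness of the nabla Laplace transform.) -/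
open FormalMultilinearSeries in
/-- Auxiliary: a summable-coefficient scalar power series over ℂ has positive radius
and hence a power series representation at 0. -/
lemma nabla_aux_hasFPowerSeriesAt (c : ℕ → ℂ) (r : ℝ) (hr : 0 < r)
    (hc : Summable (fun k : ℕ => r ^ k * ‖c k‖)) :
    HasFPowerSeriesAt (fun z : ℂ => ∑' k : ℕ, c k • z ^ k) (ofScalars ℂ c) 0 := by
  set p := ofScalars ℂ c
  have hrad : ((r.toNNReal : NNReal) : ENNReal) ≤ p.radius := by
    apply p.le_radius_of_summable_norm
    refine hc.congr fun n => ?_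
    have h1 : ‖p n‖ = ‖c n‖ := by
      rw [show p n = ofScalars ℂ c n from rfl, ofScalars_norm]
    rw [h1, Real.coe_toNNReal r hr.le, mul_comm]
  have hradpos : 0 < p.radius :=
    lt_of_lt_of_le (ENNReal.coe_pos.mpr (Real.toNNReal_pos.mpr hr)) hrad
  have := (p.hasFPowerSeriesOnBall hradpos).hasFPowerSeriesAt
  refine this.congr ?_
  filter_upwards [Metric.ball_mem_nhds (0 : ℂ) (by norm_num : (0:ℝ) < 1)] with z _
  rw [show p.sum z = FormalMultilinearSeries.ofScalarsSum c z from rfl,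
    FormalMultilinearSeries.ofScalars_sum_eq]

/-- **Uniqueness of the nabla Laplace transform.**
If the nabla Laplace transforms (about the initial instant `a`) of `f` and `g` agree on
`|1-s| < r`, then `f(k) = g(k)` for every integer `k ≥ a+1`. -/
theorem nabla_laplace_uniqueness
    (a : ℤ) (f g : ℤ → ℝ) (r : ℝ) (hr : 0 < r)
    (hf : Summable (fun k : ℕ => r ^ k * |f (a + (k : ℤ) + 1)|))
    (hg : Summable (fun k : ℕ => r ^ k * |g (a + (k : ℤ) + 1)|))
    (h : ∀ s : ℂ, ‖1 - s‖ < r →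
      (∑' k : ℕ, (1 - s) ^ k * (f (a + (k : ℤ) + 1) : ℂ)) =
        ∑' k : ℕ, (1 - s) ^ k * (g (a + (k : ℤ) + 1) : ℂ)) :
    ∀ k : ℤ, a + 1 ≤ k → f k = g k := by
  set cf : ℕ → ℂ := fun k => (f (a + (k : ℤ) + 1) : ℂ) with hcf
  set cg : ℕ → ℂ := fun k => (g (a + (k : ℤ) + 1) : ℂ) with hcg
  have hpf := nabla_aux_hasFPowerSeriesAt cf r hr (hf.congr fun n => by
    simp [cf, Complex.norm_real])
  have hpg := nabla_aux_hasFPowerSeriesAt cg r hr (hg.congr fun n => by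
    simp [cg, Complex.norm_real])
  have heq : ∀ᶠ z : ℂ in nhds 0,
      (∑' k : ℕ, cf k • z ^ k) = ∑' k : ℕ, cg k • z ^ k := by
    filter_upwards [Metric.ball_mem_nhds (0 : ℂ) hr] with z hz
    have hz' : ‖1 - (1 - z)‖ < r := by
      simpa using hz
    have := h (1 - z) hz'
    simp only [sub_sub_cancel] at this
    simpa [smul_eq_mul, mul_comm] using this
  have hps := hpf.eq_formalMultilinearSeries_of_eventually hpg heq
  have hcoef : cf = cg :=
    FormalMultilinearSeries.ofScalars_series_injective ℂ ℂ hps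
  intro k hk
  have hn : k = a + ((k - a - 1).toNat : ℤ) + 1 := by omega
  have := congrFun hcoef (k - a - 1).toNat
  simp only [hcf, hcg] at this
  rw [hn]
  exact_mod_cast this
end

section
/- Let a be an integer, α a real number with 0 < α < 1, and u : ℤ → ℝ. For each ω > 0 let z(ω, ·) : ℤ → ℝ satisfy z(ω, a) = 0 and z(ω, k) − z(ω, k−1) = −ω z(ω, k) + u(k) for every integer k ≥ a+1. Then for every integer k ≥ a+1, the function ω ↦ μ_α(ω) z(ω, k) is integrable on (0, +∞) and ∫_0^{+∞} μ_α(ω) z(ω, k) dω = {}_a∇_k^{-α} u(k). (Equivalence of the fractional sum with the output-form unilateral frequency distributed model.) -/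
/-- The `α`-th nabla fractional sum of `u : ℤ → ℝ` with initial instant `a`:
`{}_a∇_k^{-α} u(k) = ∑_{i=0}^{k-a-1} (Γ(α+i)/(Γ(α) Γ(i+1))) u(k−i)`. -/
noncomputable def nablaFracSum (a : ℤ) (α : ℝ) (u : ℤ → ℝ) (k : ℤ) : ℝ :=
  ∑ i ∈ Finset.range (k - a).toNat,
    Real.Gamma (α + i) / (Real.Gamma α * Real.Gamma (i + 1)) * u (k - i)

open MeasureTheory Set Real

lemma realBeta (p q : ℝ) (hp : 0 < p) (hq : 0 < q) :
    IntegrableOn (fun y : ℝ => y ^ (p - 1) * (1 - y) ^ (q - 1)) (Ioo (0:ℝ) 1) ∧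
    ∫ y in Ioo (0:ℝ) 1, y ^ (p - 1) * (1 - y) ^ (q - 1)
      = Real.Gamma p * Real.Gamma q / Real.Gamma (p + q) := by
  have hconv : IntervalIntegrable
      (fun x : ℝ => (x : ℂ) ^ ((p : ℂ) - 1) * (1 - (x : ℂ)) ^ ((q : ℂ) - 1)) volume 0 1 :=
    Complex.betaIntegral_convergent (by simpa using hp) (by simpa using hq)
  have hIoo : IntegrableOn
      (fun x : ℝ => (x : ℂ) ^ ((p : ℂ) - 1) * (1 - (x : ℂ)) ^ ((q : ℂ) - 1)) (Ioo (0:ℝ) 1) :=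
    ((intervalIntegrable_iff_integrableOn_Ioc_of_le zero_le_one).mp hconv).mono_set
      Ioo_subset_Ioc_self
  have hEq : ∀ x ∈ Ioo (0:ℝ) 1,
      ‖(x : ℂ) ^ ((p : ℂ) - 1) * (1 - (x : ℂ)) ^ ((q : ℂ) - 1)‖
        = x ^ (p - 1) * (1 - x) ^ (q - 1) := by
    intro x hx
    have h1 : (0:ℝ) < 1 - x := by linarith [hx.2]
    rw [norm_mul,
      Complex.norm_cpow_eq_rpow_re_of_pos hx.1,
      show (1 - (x : ℂ)) = ((1 - x : ℝ) : ℂ) by push_cast; ring,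
      Complex.norm_cpow_eq_rpow_re_of_pos h1]
    norm_num
  have hint : IntegrableOn (fun y : ℝ => y ^ (p - 1) * (1 - y) ^ (q - 1)) (Ioo (0:ℝ) 1) :=
    MeasureTheory.IntegrableOn.congr_fun hIoo.norm hEq measurableSet_Ioo
  refine ⟨hint, ?_⟩
  have hofReal : ∀ x ∈ Ioo (0:ℝ) 1,
      (x : ℂ) ^ ((p : ℂ) - 1) * (1 - (x : ℂ)) ^ ((q : ℂ) - 1)
        = ((x ^ (p - 1) * (1 - x) ^ (q - 1) : ℝ) : ℂ) := by
    intro x hx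
    have h1 : (0:ℝ) < 1 - x := by linarith [hx.2]
    rw [show (1 - (x : ℂ)) = ((1 - x : ℝ) : ℂ) by push_cast; ring,
      show ((p : ℂ) - 1) = ((p - 1 : ℝ) : ℂ) by push_cast; ring,
      show ((q : ℂ) - 1) = ((q - 1 : ℝ) : ℂ) by push_cast; ring,
      ← Complex.ofReal_cpow hx.1.le, ← Complex.ofReal_cpow h1.le]
    push_cast
    ring
  have hbeta : Complex.betaIntegral p q
      = ((∫ y in Ioo (0:ℝ) 1, y ^ (p - 1) * (1 - y) ^ (q - 1) : ℝ) : ℂ) := by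
    rw [Complex.betaIntegral, intervalIntegral.integral_of_le zero_le_one,
      integral_Ioc_eq_integral_Ioo, setIntegral_congr_fun measurableSet_Ioo hofReal]
    exact _root_.integral_ofReal
  have hG := Complex.Gamma_mul_Gamma_eq_betaIntegral
    (s := (p : ℂ)) (t := (q : ℂ)) (by simpa using hp) (by simpa using hq)
  rw [hbeta, ← Complex.ofReal_add, Complex.Gamma_ofReal, Complex.Gamma_ofReal,
    Complex.Gamma_ofReal, ← Complex.ofReal_mul, ← Complex.ofReal_mul] at hG
  have hR : Real.Gamma p * Real.Gamma q
      = Real.Gamma (p + q) * ∫ y in Ioo (0:ℝ) 1, y ^ (p - 1) * (1 - y) ^ (q - 1) := by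
    exact_mod_cast hG
  have hne : Real.Gamma (p + q) ≠ 0 := (Real.Gamma_pos_of_pos (by linarith)).ne'
  field_simp [hne] at hR ⊢
  linarith [hR]

lemma keyIntegral (α : ℝ) (hα0 : 0 < α) (hα1 : α < 1) (n : ℕ) :
    IntegrableOn (fun ω : ℝ => ω ^ (-α) / (1 + ω) ^ (n + 1)) (Ioi (0:ℝ)) ∧
    ∫ ω in Ioi (0:ℝ), ω ^ (-α) / (1 + ω) ^ (n + 1)
      = Real.Gamma (1 - α) * Real.Gamma (α + n) / Real.Gamma (n + 1) := by
  set f : ℝ → ℝ := fun y => y / (1 - y) with hf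
  set f' : ℝ → ℝ := fun y => ((1 - y) ^ 2)⁻¹ with hf'
  set g : ℝ → ℝ := fun ω => ω ^ (-α) / (1 + ω) ^ (n + 1) with hg
  have himg : f '' Ioo (0:ℝ) 1 = Ioi (0:ℝ) := by
    ext x
    simp only [mem_image, mem_Ioo, mem_Ioi]
    constructor
    · rintro ⟨y, ⟨hy0, hy1⟩, rfl⟩
      exact div_pos hy0 (by linarith)
    · intro hx
      refine ⟨x / (1 + x), ⟨div_pos hx (by linarith), ?_⟩, ?_⟩
      · rw [div_lt_one (by linarith)]; linarith
      · have h1 : (1:ℝ) + x ≠ 0 := by positivity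
        simp only [hf]
        rw [show 1 - x / (1 + x) = 1 / (1 + x) by field_simp; ring]
        field_simp
  have hderiv : ∀ y ∈ Ioo (0:ℝ) 1, HasDerivWithinAt f (f' y) (Ioo (0:ℝ) 1) y := by
    intro y hy
    have h1 : (1:ℝ) - y ≠ 0 := by have := hy.2; intro h; simp only [mem_Ioo] at hy; linarith [sub_eq_zero.mp h]
    have : HasDerivAt f ((1 * (1 - y) - y * (-1)) / (1 - y) ^ 2) y := by
      exact (hasDerivAt_id y).div ((hasDerivAt_id y).const_sub 1) h1
    have h2 : (1 * (1 - y) - y * (-1)) / (1 - y) ^ 2 = f' y := by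
      simp only [hf']; field_simp; ring
    rw [h2] at this
    exact this.hasDerivWithinAt
  have hinj : InjOn f (Ioo (0:ℝ) 1) := by
    intro y1 h1 y2 h2 he
    simp only [mem_Ioo] at h1 h2
    have d1 : (1:ℝ) - y1 ≠ 0 := by linarith
    have d2 : (1:ℝ) - y2 ≠ 0 := by linarith
    simp only [hf] at he
    field_simp at he
    linarith
  have hptw : ∀ y ∈ Ioo (0:ℝ) 1,
      |f' y| • g (f y) = y ^ ((1 - α) - 1) * (1 - y) ^ ((α + n) - 1) := by
    intro y hy
    obtain ⟨hy0, hy1⟩ := hy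
    have h1 : (0:ℝ) < 1 - y := by linarith
    have hfy : (0:ℝ) < f y := div_pos hy0 h1
    have habs : |f' y| = ((1 - y) ^ 2)⁻¹ := abs_of_pos (by positivity)
    have hadd : 1 + f y = 1 / (1 - y) := by simp only [hf]; field_simp; ring
    have hpow : (1 + f y) ^ (n + 1) = ((1 - y) ^ (n + 1))⁻¹ := by
      rw [hadd, div_pow, one_pow, one_div]
    have hrpow : (f y) ^ (-α) = y ^ (-α) * ((1 - y) ^ (-α))⁻¹ := by
      simp only [hf]
      rw [Real.div_rpow hy0.le h1.le, div_eq_mul_inv]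
    rw [smul_eq_mul, habs, hg]
    simp only
    rw [hpow, hrpow, ← Real.rpow_neg h1.le]
    rw [show ((1 - y) ^ 2)⁻¹ = (1 - y) ^ (-2 : ℝ) by
      rw [← Real.rpow_natCast (1 - y) 2, ← Real.rpow_neg h1.le]; norm_num]
    rw [div_inv_eq_mul, ← Real.rpow_natCast (1 - y) (n + 1)]
    rw [show (1:ℝ) - α - 1 = -α by ring]
    rw [show (α + (n:ℝ) - 1) = (-2) + (-(-α) + ((n + 1 : ℕ) : ℝ)) by push_cast; ring]
    rw [Real.rpow_add h1, Real.rpow_add h1]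
    ring
  have hbeta := realBeta (1 - α) (α + n) (by linarith) (by positivity)
  have hii := integrableOn_image_iff_integrableOn_abs_deriv_smul measurableSet_Ioo hderiv hinj g
  rw [himg] at hii
  have hIntOn : IntegrableOn g (Ioi (0:ℝ)) := by
    rw [hii]
    exact IntegrableOn.congr_fun hbeta.1 (fun y hy => (hptw y hy).symm) measurableSet_Ioo
  refine ⟨hIntOn, ?_⟩
  have hIE := integral_image_eq_integral_abs_deriv_smul measurableSet_Ioo hderiv hinj g
  rw [himg] at hIE
  rw [hIE,
    setIntegral_congr_fun measurableSet_Ioo hptw, hbeta.2]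
  congr 2
  rw [show (1 - α) + (α + n) = (n:ℝ) + 1 by ring]

/-- **Output-form unilateral frequency distributed model.**
If for each `ω > 0`, `z(ω,·)` satisfies `z(ω,a) = 0` and
`z(ω,k) − z(ω,k−1) = −ω z(ω,k) + u(k)` for `k ≥ a+1`, then for every `k ≥ a+1` the function
`ω ↦ μ_α(ω) z(ω,k)` is integrable on `(0,∞)` and
`∫_0^∞ μ_α(ω) z(ω,k) dω = {}_a∇_k^{-α} u(k)`, where `μ_α(ω) = sin(απ)/(π ω^α)`. -/
theorem output_form_frequency_distributed_model
    (a : ℤ) (α : ℝ) (hα0 : 0 < α) (hα1 : α < 1) (u : ℤ → ℝ)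
    (z : ℝ → ℤ → ℝ)
    (hz0 : ∀ ω : ℝ, 0 < ω → z ω a = 0)
    (hz : ∀ ω : ℝ, 0 < ω → ∀ k : ℤ, a + 1 ≤ k →
      z ω k - z ω (k - 1) = -ω * z ω k + u k) :
    ∀ k : ℤ, a + 1 ≤ k →
      MeasureTheory.IntegrableOn
        (fun ω : ℝ => Real.sin (α * Real.pi) / (Real.pi * ω ^ α) * z ω k)
        (Set.Ioi (0 : ℝ)) ∧
      (∫ ω in Set.Ioi (0 : ℝ),
          Real.sin (α * Real.pi) / (Real.pi * ω ^ α) * z ω k) =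
        nablaFracSum a α u k := by
  -- closed form for z
  have hzformN : ∀ ω : ℝ, 0 < ω → ∀ n : ℕ,
      z ω (a + n) = ∑ i ∈ Finset.range n, u (a + n - i) / (1 + ω) ^ (i + 1) := by
    intro ω hω n
    induction n with
    | zero => simpa using hz0 ω hω
    | succ n ih =>
      have h1 : (0:ℝ) < 1 + ω := by linarith
      have hca : (a + ((n + 1 : ℕ) : ℤ)) = (a + n) + 1 := by push_cast; ring
      have hrec := hz ω hω ((a + n) + 1) (by omega)
      rw [show a + (n : ℤ) + 1 - 1 = a + n from by ring] at hrec
      have hstep : z ω (a + n + 1) = (z ω (a + n) + u (a + n + 1)) / (1 + ω) := by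
        field_simp
        linarith [hrec]
      rw [hca, hstep, ih, Finset.sum_range_succ']
      have ht : ∀ i : ℕ, u (a + (n : ℤ) + 1 - ((i + 1 : ℕ) : ℤ)) / (1 + ω) ^ ((i + 1) + 1)
          = (u (a + (n : ℤ) - (i : ℤ)) / (1 + ω) ^ (i + 1)) / (1 + ω) := by
        intro i
        rw [show (a + (n : ℤ) + 1 - ((i + 1 : ℕ) : ℤ)) = a + (n : ℤ) - (i : ℤ) by
          push_cast; ring, pow_succ, div_div]
      rw [Finset.sum_congr rfl fun i _ => ht i, ← Finset.sum_div]
      push_cast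
      field_simp
      simp
  have hzform : ∀ k : ℤ, a ≤ k → ∀ ω : ℝ, 0 < ω →
      z ω k = ∑ i ∈ Finset.range (k - a).toNat, u (k - i) / (1 + ω) ^ (i + 1) := by
    intro k hk ω hω
    obtain ⟨n, rfl⟩ : ∃ n : ℕ, k = a + n := ⟨(k - a).toNat, by omega⟩
    have hn : (a + (n : ℤ) - a).toNat = n := by omega
    rw [hn]
    exact hzformN ω hω n
  intro k hk
  set m : ℕ := (k - a).toNat with hmdef
  -- a.e. / pointwise identity on Ioi 0
  have hEqOn : EqOn (fun ω : ℝ => Real.sin (α * Real.pi) / (Real.pi * ω ^ α) * z ω k)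
      (fun ω : ℝ => ∑ i ∈ Finset.range m,
        (Real.sin (α * Real.pi) / Real.pi * u (k - i)) * (ω ^ (-α) / (1 + ω) ^ (i + 1)))
      (Ioi (0:ℝ)) := by
    intro ω hω
    have hω' : (0:ℝ) < ω := hω
    simp only
    rw [hzform k (by omega) ω hω', Finset.mul_sum]
    refine Finset.sum_congr rfl fun i _ => ?_
    rw [Real.rpow_neg hω'.le]
    have hωα : ω ^ α ≠ 0 := (Real.rpow_pos_of_pos hω' α).ne'
    ring
  have hInt : ∀ i : ℕ, IntegrableOn
      (fun ω : ℝ => (Real.sin (α * Real.pi) / Real.pi * u (k - i)) *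
        (ω ^ (-α) / (1 + ω) ^ (i + 1))) (Ioi (0:ℝ)) :=
    fun i => ((keyIntegral α hα0 hα1 i).1.const_mul _)
  have hIntSum : IntegrableOn
      (fun ω : ℝ => ∑ i ∈ Finset.range m,
        (Real.sin (α * Real.pi) / Real.pi * u (k - i)) * (ω ^ (-α) / (1 + ω) ^ (i + 1)))
      (Ioi (0:ℝ)) := by
    exact integrable_finset_sum _ fun i _ => hInt i
  have hIntMain : IntegrableOn
      (fun ω : ℝ => Real.sin (α * Real.pi) / (Real.pi * ω ^ α) * z ω k) (Ioi (0:ℝ)) :=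
    IntegrableOn.congr_fun hIntSum (fun ω hω => (hEqOn hω).symm) measurableSet_Ioi
  refine ⟨hIntMain, ?_⟩
  rw [setIntegral_congr_fun measurableSet_Ioi hEqOn,
    integral_finset_sum _ fun i _ => hInt i]
  unfold nablaFracSum
  rw [← hmdef]
  refine Finset.sum_congr rfl fun i _ => ?_
  rw [integral_const_mul, (keyIntegral α hα0 hα1 i).2]
  have hsin : Real.sin (α * Real.pi) ≠ 0 := by
    rw [mul_comm]
    exact Real.sin_pos_of_pos_of_lt_pi (by positivity)
      (by nlinarith [Real.pi_pos]) |>.ne'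
  have hrefl := Real.Gamma_mul_Gamma_one_sub α
  have hΓα : Real.Gamma α ≠ 0 := (Real.Gamma_pos_of_pos hα0).ne'
  have hΓ1α : Real.Gamma (1 - α) ≠ 0 := (Real.Gamma_pos_of_pos (by linarith)).ne'
  have hΓi : Real.Gamma ((i : ℝ) + 1) ≠ 0 := by
    have : (0:ℝ) < (i : ℝ) + 1 := by positivity
    exact (Real.Gamma_pos_of_pos this).ne'
  have hπ : Real.pi ≠ 0 := Real.pi_ne_zero
  have hkey : Real.sin (α * Real.pi) / Real.pi * Real.Gamma (1 - α) = 1 / Real.Gamma α := by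
    rw [mul_comm α Real.pi] at *
    field_simp
    field_simp at hrefl
    have h3 : Real.Gamma α * Real.Gamma (1 - α) * Real.sin (Real.pi * α) = Real.pi := by
      rw [mul_comm α Real.pi] at hrefl; rw [hrefl]; field_simp
    linear_combination h3
  calc Real.sin (α * Real.pi) / Real.pi * u (k - i) *
        (Real.Gamma (1 - α) * Real.Gamma (α + i) / Real.Gamma (i + 1))
      = (Real.sin (α * Real.pi) / Real.pi * Real.Gamma (1 - α)) *
        (Real.Gamma (α + i) / Real.Gamma (i + 1)) * u (k - i) := by ring
    _ = Real.Gamma (α + i) / (Real.Gamma α * Real.Gamma (i + 1)) * u (k - i) := by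
        rw [hkey]; field_simp
end

section
/- Let a be an integer, α a real number with 0 < α < 1, and u : ℤ → ℝ. For each ω > 0 let z(ω, ·) : ℤ → ℝ satisfy z(ω, a) = 0 and z(ω, k) − z(ω, k−1) = −ω z(ω, k) + μ_α(ω) u(k) for every integer k ≥ a+1. Then for every integer k ≥ a+1, the function ω ↦ z(ω, k) is integrable on (0, +∞) and ∫_0^{+∞} z(ω, k) dω = {}_a∇_k^{-α} u(k). (Equivalence of the fractional sum with the input-form unilateral frequency distributed model.) -/
section Aux
open MeasureTheory Set Real

lemma betaIoo (s t : ℝ) (hs : 0 < s) (ht : 0 < t) :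
    IntegrableOn (fun x : ℝ => x ^ (s-1) * (1-x) ^ (t-1)) (Ioo 0 1) ∧
    ∫ x in Ioo (0:ℝ) 1, x ^ (s-1) * (1-x)^(t-1)
      = Real.Gamma s * Real.Gamma t / Real.Gamma (s+t) := by
  have hconv := Complex.betaIntegral_convergent (u := s) (v := t) (by simpa) (by simpa)
  have hInt : IntegrableOn (fun x : ℝ => (x:ℂ) ^ ((s:ℂ)-1) * ((1:ℂ)-x) ^ ((t:ℂ)-1)) (Ioo 0 1) :=
    hconv.1.mono_set Ioo_subset_Ioc_self
  have heq : ∀ x ∈ Ioo (0:ℝ) 1,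
      ((x ^ (s-1) * (1-x)^(t-1) : ℝ) : ℂ) = (x:ℂ) ^ ((s:ℂ)-1) * ((1:ℂ)-x) ^ ((t:ℂ)-1) := by
    intro x hx
    rw [Complex.ofReal_mul, Complex.ofReal_cpow hx.1.le,
      Complex.ofReal_cpow (by linarith [hx.2] : (0:ℝ) ≤ 1 - x)]
    push_cast
    ring
  have heqae : (fun x : ℝ => x ^ (s-1) * (1-x) ^ (t-1)) =ᵐ[volume.restrict (Ioo (0:ℝ) 1)]
      (fun x : ℝ => ((x:ℂ) ^ ((s:ℂ)-1) * ((1:ℂ)-x) ^ ((t:ℂ)-1)).re) := by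
    filter_upwards [ae_restrict_mem measurableSet_Ioo] with x hx
    rw [← heq x hx, Complex.ofReal_re]
  have hIntR : IntegrableOn (fun x : ℝ => x ^ (s-1) * (1-x) ^ (t-1)) (Ioo 0 1) :=
    (hInt.re).congr heqae.symm
  refine ⟨hIntR, ?_⟩
  have key : ((∫ x in Ioo (0:ℝ) 1, x ^ (s-1) * (1-x)^(t-1) : ℝ) : ℂ)
      = Complex.betaIntegral s t := by
    have h1 : ((∫ x in Ioo (0:ℝ) 1, x ^ (s-1) * (1-x)^(t-1) : ℝ) : ℂ)
        = ∫ x in Ioo (0:ℝ) 1, ((x ^ (s-1) * (1-x)^(t-1) : ℝ) : ℂ) :=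
      (integral_ofReal (𝕜 := ℂ)).symm
    rw [h1, Complex.betaIntegral, intervalIntegral.integral_of_le (by norm_num : (0:ℝ) ≤ 1),
      MeasureTheory.integral_Ioc_eq_integral_Ioo]
    exact setIntegral_congr_fun measurableSet_Ioo heq
  have hβ := Complex.Gamma_mul_Gamma_eq_betaIntegral (s := s) (t := t) (by simpa) (by simpa)
  have hΓ : Complex.Gamma ((s:ℂ)+t) ≠ 0 := by
    rw [show ((s:ℂ)+t) = ((s+t:ℝ):ℂ) by push_cast; ring, Complex.Gamma_ofReal]
    exact_mod_cast (Real.Gamma_pos_of_pos (by linarith : (0:ℝ) < s + t)).ne'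
  have hβ' : Complex.betaIntegral s t
      = Complex.Gamma s * Complex.Gamma t / Complex.Gamma ((s:ℂ)+t) := by
    rw [eq_div_iff hΓ, mul_comm _ (Complex.Gamma _), ← hβ]
  have : ((∫ x in Ioo (0:ℝ) 1, x ^ (s-1) * (1-x)^(t-1) : ℝ) : ℂ)
      = ((Real.Gamma s * Real.Gamma t / Real.Gamma (s+t) : ℝ) : ℂ) := by
    rw [key, hβ']
    simp [← Complex.Gamma_ofReal, Complex.ofReal_div, Complex.ofReal_mul, Complex.ofReal_add]
  exact_mod_cast this

lemma betaIoi (s t : ℝ) (hs : 0 < s) (ht : 0 < t) :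
    IntegrableOn (fun ω : ℝ => ω ^ (s-1) * (1+ω) ^ (-s-t)) (Ioi 0) ∧
    ∫ ω in Ioi (0:ℝ), ω ^ (s-1) * (1+ω) ^ (-s-t)
      = Real.Gamma s * Real.Gamma t / Real.Gamma (s+t) := by
  set f : ℝ → ℝ := fun x => x / (1 - x) with hf
  set f' : ℝ → ℝ := fun x => ((1-x)^2)⁻¹ with hf'
  have hderiv : ∀ x ∈ Ioo (0:ℝ) 1, HasDerivWithinAt f (f' x) (Ioo 0 1) x := by
    intro x hx
    have hne : (1:ℝ) - x ≠ 0 := by have := hx.2; intro h; linarith [h]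
    have h : HasDerivAt f ((1 * (1-x) - x * (0 - 1)) / (1-x)^2) x :=
      (hasDerivAt_id x).div ((hasDerivAt_const x (1:ℝ)).sub (hasDerivAt_id x)) hne
    have e : f' x = (1 * (1-x) - x * (0 - 1)) / (1-x)^2 := by
      show ((1-x)^2)⁻¹ = _
      ring
    rw [e]
    exact h.hasDerivWithinAt
  have hinj : InjOn f (Ioo 0 1) := by
    intro x hx y hy h
    have hnx : (1:ℝ) - x ≠ 0 := by have := hx.2; intro h; linarith [h]
    have hny : (1:ℝ) - y ≠ 0 := by have := hy.2; intro h; linarith [h]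
    rw [hf] at h
    field_simp at h
    linarith [h]
  have himg : f '' Ioo 0 1 = Ioi (0:ℝ) := by
    ext ω
    constructor
    · rintro ⟨x, hx, rfl⟩
      exact div_pos hx.1 (by linarith [hx.2])
    · intro hω
      refine ⟨ω / (1 + ω), ⟨div_pos hω (by linarith [mem_Ioi.mp hω]), ?_⟩, ?_⟩
      · rw [div_lt_one (by linarith [mem_Ioi.mp hω])]; linarith [mem_Ioi.mp hω]
      · have h1 : (1:ℝ) + ω ≠ 0 := by have := mem_Ioi.mp hω; positivity
        rw [hf]
        field_simp
        ring
  have key : ∀ x ∈ Ioo (0:ℝ) 1,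
      |f' x| • (f x ^ (s-1) * (1 + f x) ^ (-s-t)) = x ^ (s-1) * (1-x) ^ (t-1) := by
    intro x hx
    have h0x : (0:ℝ) < x := hx.1
    have h1x : (0:ℝ) < 1 - x := by linarith [hx.2]
    have hfx : 1 + f x = (1-x)⁻¹ := by rw [hf]; field_simp; ring
    have e1 : f x ^ (s-1) = x ^ (s-1) * (1-x) ^ (1-s) := by
      rw [hf, Real.div_rpow h0x.le h1x.le, div_eq_mul_inv, ← Real.rpow_neg h1x.le]
      norm_num
    have e3 : (1 + f x) ^ (-s-t) = (1-x) ^ (s+t) := by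
      rw [hfx, Real.inv_rpow h1x.le, ← Real.rpow_neg h1x.le]
      congr 1; ring
    have e4 : |f' x| = (1-x) ^ (-2 : ℝ) := by
      have hfx' : f' x = ((1-x)^2)⁻¹ := rfl
      rw [hfx', abs_of_pos (by positivity), ← Real.rpow_natCast (1-x) 2,
        ← Real.rpow_neg h1x.le]
      norm_num
    have hcomb : ∀ p q : ℝ, (1-x)^p * (1-x)^q = (1-x)^(p+q) :=
      fun p q => (Real.rpow_add h1x p q).symm
    rw [smul_eq_mul, e1, e3, e4]
    calc (1-x) ^ (-2:ℝ) * (x ^ (s-1) * (1-x) ^ (1-s) * (1-x) ^ (s+t))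
        = x ^ (s-1) * ((1-x) ^ (-2:ℝ) * ((1-x) ^ (1-s) * (1-x) ^ (s+t))) := by ring
      _ = x ^ (s-1) * (1-x) ^ (-2 + (1-s + (s+t))) := by rw [hcomb, hcomb]
      _ = x ^ (s-1) * (1-x) ^ (t-1) := by
          rw [show (-2 + (1 - s + (s + t)) : ℝ) = t - 1 by ring]
  obtain ⟨hIoo, hval⟩ := betaIoo s t hs ht
  set g : ℝ → ℝ := fun ω => ω ^ (s-1) * (1+ω) ^ (-s-t) with hg
  have hintg : IntegrableOn g (Ioi (0:ℝ)) := by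
    rw [← himg, integrableOn_image_iff_integrableOn_abs_deriv_smul measurableSet_Ioo hderiv hinj g]
    exact hIoo.congr_fun (fun x hx => (key x hx).symm) measurableSet_Ioo
  refine ⟨hintg, ?_⟩
  rw [← himg, integral_image_eq_integral_abs_deriv_smul measurableSet_Ioo hderiv hinj g, ← hval]
  exact setIntegral_congr_fun measurableSet_Ioo key

lemma muInt (α : ℝ) (hα0 : 0 < α) (hα1 : α < 1) (n : ℕ) :
    IntegrableOn (fun ω : ℝ => Real.sin (α * π) / (π * ω ^ α) * (1+ω) ^ (-(1:ℝ) - n)) (Ioi 0) ∧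
    ∫ ω in Ioi (0:ℝ), Real.sin (α * π) / (π * ω ^ α) * (1+ω) ^ (-(1:ℝ) - n)
      = Real.Gamma (α + n) / (Real.Gamma α * Real.Gamma ((n:ℝ) + 1)) := by
  obtain ⟨hi, hv⟩ := betaIoi (1-α) (α+n) (by linarith) (by positivity)
  set c : ℝ := Real.sin (α * π) / π with hc
  have hpt : ∀ ω ∈ Ioi (0:ℝ),
      Real.sin (α * π) / (π * ω ^ α) * (1+ω) ^ (-(1:ℝ) - n)
        = c * (ω ^ ((1-α)-1) * (1+ω) ^ (-(1-α)-(α+n))) := by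
    intro ω hω
    have hω0 : (0:ℝ) < ω := hω
    rw [show ((1-α)-1 : ℝ) = -α by ring, show (-(1-α)-(α+(n:ℝ)):ℝ) = -(1:ℝ)-n by ring,
      Real.rpow_neg hω0.le]
    have hπ : (π:ℝ) ≠ 0 := Real.pi_ne_zero
    have hωα : ω ^ α ≠ 0 := (Real.rpow_pos_of_pos hω0 α).ne'
    rw [hc, div_eq_mul_inv, div_eq_mul_inv, mul_inv]
    ring
  have hint : IntegrableOn
      (fun ω : ℝ => Real.sin (α * π) / (π * ω ^ α) * (1+ω) ^ (-(1:ℝ) - n)) (Ioi 0) :=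
    MeasureTheory.IntegrableOn.congr_fun (hi.const_mul c)
      (fun ω hω => (hpt ω hω).symm) measurableSet_Ioi
  refine ⟨hint, ?_⟩
  rw [setIntegral_congr_fun measurableSet_Ioi hpt, integral_const_mul, hv]
  have hsin : Real.sin (α * π) ≠ 0 := by
    have : 0 < Real.sin (α * π) :=
      Real.sin_pos_of_pos_of_lt_pi (by positivity) (by nlinarith [Real.pi_pos])
    exact this.ne'
  have hΓα : Real.Gamma α ≠ 0 := (Real.Gamma_pos_of_pos hα0).ne'
  have hΓ1α : Real.Gamma (1-α) ≠ 0 := (Real.Gamma_pos_of_pos (by linarith)).ne'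
  have hΓn : Real.Gamma ((n:ℝ)+1) ≠ 0 := (Real.Gamma_pos_of_pos (by positivity)).ne'
  have h := Real.Gamma_mul_Gamma_one_sub α
  rw [show ((1-α)+(α+(n:ℝ)):ℝ) = (n:ℝ)+1 by ring]
  rw [hc, mul_comm π α] at *
  field_simp at h ⊢
  linear_combination h

end Aux

open MeasureTheory Set Real in
/-- **Input-form unilateral frequency distributed model.**
If for each `ω > 0`, `z(ω,·)` satisfies `z(ω,a) = 0` and
`z(ω,k) − z(ω,k−1) = −ω z(ω,k) + μ_α(ω) u(k)` for `k ≥ a+1`, then for every `k ≥ a+1` the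
function `ω ↦ z(ω,k)` is integrable on `(0,∞)` and
`∫_0^∞ z(ω,k) dω = {}_a∇_k^{-α} u(k)`, where `μ_α(ω) = sin(απ)/(π ω^α)`. -/
theorem input_form_frequency_distributed_model
    (a : ℤ) (α : ℝ) (hα0 : 0 < α) (hα1 : α < 1) (u : ℤ → ℝ)
    (z : ℝ → ℤ → ℝ)
    (hz0 : ∀ ω : ℝ, 0 < ω → z ω a = 0)
    (hz : ∀ ω : ℝ, 0 < ω → ∀ k : ℤ, a + 1 ≤ k →
      z ω k - z ω (k - 1) =
        -ω * z ω k + Real.sin (α * Real.pi) / (Real.pi * ω ^ α) * u k) :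
    ∀ k : ℤ, a + 1 ≤ k →
      MeasureTheory.IntegrableOn (fun ω : ℝ => z ω k) (Set.Ioi (0 : ℝ)) ∧
      (∫ ω in Set.Ioi (0 : ℝ), z ω k) = nablaFracSum a α u k := by
  have hform : ∀ ω : ℝ, 0 < ω → ∀ m : ℕ, z ω (a + m)
      = ∑ i ∈ Finset.range m,
          Real.sin (α * π) / (π * ω ^ α) * (1+ω) ^ (-(1:ℝ) - i) * u (a + m - i) := by
    intro ω hω m
    induction m with
    | zero => simpa using hz0 ω hω
    | succ m ih =>
      have h1ω : (0:ℝ) < 1 + ω := by linarith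
      have hrec := hz ω hω (a + (m+1 : ℕ)) (by push_cast; omega)
      have h2 : ((a + (m+1 : ℕ) : ℤ) - 1) = a + m := by push_cast; ring
      rw [h2] at hrec
      have hzval : z ω (a + (m+1 : ℕ))
          = (1+ω)⁻¹ * (z ω (a + m) + Real.sin (α * π) / (π * ω ^ α) * u (a + (m+1 : ℕ))) := by
        rw [eq_inv_mul_iff_mul_eq₀ h1ω.ne']
        linear_combination hrec
      rw [hzval, ih, Finset.sum_range_succ']
      have hstep : ∀ i : ℕ,
          Real.sin (α * π) / (π * ω ^ α) * (1+ω) ^ (-(1:ℝ) - ((i:ℕ)+1 : ℕ)) * u (a + (m+1 : ℕ) - ((i:ℕ)+1 : ℕ))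
            = (1+ω)⁻¹ * (Real.sin (α * π) / (π * ω ^ α) * (1+ω) ^ (-(1:ℝ) - i) * u (a + m - i)) := by
        intro i
        have harg : (a + (m+1 : ℕ) - ((i:ℕ)+1 : ℕ) : ℤ) = a + m - i := by push_cast; ring
        have hexp : (-(1:ℝ) - (((i:ℕ)+1 : ℕ) : ℝ)) = (-(1:ℝ) - i) + (-1) := by push_cast; ring
        rw [harg, hexp, Real.rpow_add h1ω, Real.rpow_neg_one]
        ring
      rw [Finset.sum_congr rfl (fun i _ => hstep i), ← Finset.mul_sum]
      have h0 : Real.sin (α * π) / (π * ω ^ α) * (1+ω) ^ (-(1:ℝ) - ((0:ℕ):ℝ)) * u (a + (m+1 : ℕ) - ((0:ℕ):ℤ))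
          = (1+ω)⁻¹ * (Real.sin (α * π) / (π * ω ^ α) * u (a + (m+1 : ℕ))) := by
        norm_num [Real.rpow_neg_one]
        ring
      rw [h0]
      ring
  intro k hk
  set n : ℕ := (k - a).toNat with hn
  have hkn : k = a + n := by
    have : ((k - a).toNat : ℤ) = k - a := Int.toNat_of_nonneg (by omega)
    omega
  have hterm : ∀ i : ℕ, MeasureTheory.IntegrableOn
      (fun ω : ℝ => Real.sin (α * π) / (π * ω ^ α) * (1+ω) ^ (-(1:ℝ) - i) * u (a + n - i))
      (Set.Ioi (0:ℝ)) := fun i => (muInt α hα0 hα1 i).1.mul_const _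
  have hsumInt : MeasureTheory.IntegrableOn
      (fun ω : ℝ => ∑ i ∈ Finset.range n,
        Real.sin (α * π) / (π * ω ^ α) * (1+ω) ^ (-(1:ℝ) - i) * u (a + n - i))
      (Set.Ioi (0:ℝ)) := integrable_finset_sum _ (fun i _ => hterm i)
  have hae : (fun ω : ℝ => z ω k) =ᵐ[volume.restrict (Set.Ioi (0:ℝ))]
      (fun ω : ℝ => ∑ i ∈ Finset.range n,
        Real.sin (α * π) / (π * ω ^ α) * (1+ω) ^ (-(1:ℝ) - i) * u (a + n - i)) := by
    filter_upwards [ae_restrict_mem measurableSet_Ioi] with ω hω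
    rw [hkn]
    exact hform ω hω n
  refine ⟨hsumInt.congr hae.symm, ?_⟩
  rw [integral_congr_ae hae, integral_finset_sum _ (fun i _ => hterm i)]
  rw [nablaFracSum, hkn]
  refine Finset.sum_congr (by rw [hn]; congr 1; omega) (fun i _ => ?_)
  rw [integral_mul_const, (muInt α hα0 hα1 i).2]
end

section
/- Let a be an integer, α a real number with 0 < α < 1, and u : ℤ → ℝ. For each ω > 0 let z(ω, ·) : ℤ → ℝ satisfy z(ω, a) = 0 and z(ω, k) − z(ω, k−1) = −ω z(ω, k) + √(μ_α(ω)) u(k) for every integer k ≥ a+1. Then for every integer k ≥ a+1, the function ω ↦ √(μ_α(ω)) z(ω, k) is integrable on (0, +∞) and ∫_0^{+∞} √(μ_α(ω)) z(ω, k) dω = {}_a∇_k^{-α} u(k). (Equivalence of the fractional sum with the balance-form unilateral frequency distributed model.) -/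
open MeasureTheory Set Real

lemma complex_beta_eq (p q : ℝ) :
    Complex.betaIntegral p q =
      ((∫ x in (0:ℝ)..1, x ^ (p-1) * (1-x) ^ (q-1) : ℝ) : ℂ) := by
  rw [Complex.betaIntegral, ← intervalIntegral.integral_ofReal]
  refine intervalIntegral.integral_congr fun x hx => ?_
  rw [uIcc_of_le zero_le_one] at hx
  push_cast
  rw [Complex.ofReal_cpow hx.1 (p-1), Complex.ofReal_cpow (by linarith [hx.2] : (0:ℝ) ≤ 1 - x) (q-1)]
  push_cast
  ring_nf

lemma beta_integrable (p q : ℝ) (hp : 0 < p) (hq : 0 < q) :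
    IntegrableOn (fun x : ℝ => x ^ (p-1) * (1-x) ^ (q-1)) (Ioo (0:ℝ) 1) := by
  have h := (Complex.betaIntegral_convergent (u := p) (v := q) (by simpa) (by simpa)).1
  have h2 : IntegrableOn (fun x : ℝ =>
      ((x:ℂ) ^ ((p:ℂ)-1) * ((1:ℂ)-x) ^ ((q:ℂ)-1)).re) (Ioo (0:ℝ) 1) := by
    exact (h.mono_set Ioo_subset_Ioc_self).re
  refine h2.congr_fun (fun x hx => ?_) measurableSet_Ioo
  have e1 := Complex.ofReal_cpow hx.1.le (p-1)
  have e2 := Complex.ofReal_cpow (by linarith [hx.2] : (0:ℝ) ≤ 1 - x) (q-1)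
  push_cast at e1 e2 ⊢
  rw [← e1, ← e2, ← Complex.ofReal_mul, Complex.ofReal_re]

lemma beta_value (p q : ℝ) (hp : 0 < p) (hq : 0 < q) :
    ∫ x in Ioo (0:ℝ) 1, x ^ (p-1) * (1-x) ^ (q-1) =
      Real.Gamma p * Real.Gamma q / Real.Gamma (p+q) := by
  have hc := Complex.Gamma_mul_Gamma_eq_betaIntegral (s := p) (t := q) (by simpa) (by simpa)
  rw [complex_beta_eq] at hc
  have hI : (∫ x in (0:ℝ)..1, x ^ (p-1) * (1-x) ^ (q-1)) =
      ∫ x in Ioo (0:ℝ) 1, x ^ (p-1) * (1-x) ^ (q-1) := by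
    rw [intervalIntegral.integral_of_le zero_le_one,
      MeasureTheory.integral_Ioc_eq_integral_Ioo]
  have hG : Real.Gamma p * Real.Gamma q = Real.Gamma (p+q) *
      (∫ x in Ioo (0:ℝ) 1, x ^ (p-1) * (1-x) ^ (q-1)) := by
    have := congrArg Complex.re hc
    rw [← Complex.ofReal_add, Complex.Gamma_ofReal, Complex.Gamma_ofReal,
      Complex.Gamma_ofReal] at this
    push_cast at this
    rw [← Complex.ofReal_mul, ← Complex.ofReal_mul] at this
    simpa [hI] using this
  have hne : Real.Gamma (p+q) ≠ 0 := ne_of_gt (Real.Gamma_pos_of_pos (by linarith))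
  field_simp [hG]
  linarith [hG]


lemma phi_image : (fun x : ℝ => x / (1 - x)) '' Ioo 0 1 = Ioi 0 := by
  ext ω
  constructor
  · rintro ⟨x, hx, rfl⟩
    exact mem_Ioi.2 (div_pos hx.1 (by linarith [hx.2]))
  · intro hω
    have hω' : (0:ℝ) < ω := hω
    refine ⟨ω / (1 + ω), ⟨by positivity, ?_⟩, ?_⟩
    · rw [div_lt_one (by linarith)]; linarith
    · field_simp
      ring

lemma phi_inj : InjOn (fun x : ℝ => x / (1 - x)) (Ioo 0 1) := by
  intro x hx y hy h
  have h1 : (1:ℝ) - x ≠ 0 := by have := hx.2; intro h'; linarith [hx.2]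
  have h2 : (1:ℝ) - y ≠ 0 := by intro h'; linarith [hy.2]
  field_simp at h
  linarith

lemma phi_deriv {x : ℝ} (hx : x ∈ Ioo (0:ℝ) 1) :
    HasDerivWithinAt (fun x : ℝ => x / (1 - x)) (((1 - x) ^ 2)⁻¹) (Ioo 0 1) x := by
  have h1 : (1:ℝ) - x ≠ 0 := by intro h'; linarith [hx.2]
  have := (hasDerivAt_id x).div ((hasDerivAt_id x).const_sub 1) h1
  refine (this.congr_deriv ?_).hasDerivWithinAt
  simp only [id, one_mul, mul_neg, mul_one, sub_neg_eq_add, sub_add_cancel, one_div]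

lemma sub_integrand (α : ℝ) (i : ℕ) {x : ℝ} (hx : x ∈ Ioo (0:ℝ) 1) :
    |((1 - x) ^ 2)⁻¹| • ((x / (1 - x)) ^ (-α) * ((1 + x / (1 - x)) ^ (i+1))⁻¹) =
    x ^ ((1 - α) - 1) * (1 - x) ^ ((α + i) - 1) := by
  have hx0 : (0:ℝ) < x := hx.1
  have hx1 : (0:ℝ) < 1 - x := by linarith [hx.2]
  have h1 : 1 + x / (1 - x) = (1 - x)⁻¹ := by field_simp; ring
  have e1 : (x / (1 - x)) ^ (-α) = x ^ (-α) * (1 - x) ^ α := by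
    rw [Real.div_rpow hx0.le hx1.le, Real.rpow_neg hx1.le, div_inv_eq_mul]
  have e2 : ((1 + x / (1 - x)) ^ (i+1))⁻¹ = (1 - x) ^ ((i:ℝ)+1) := by
    rw [h1, inv_pow, inv_inv, ← Real.rpow_natCast]
    push_cast
    ring_nf
  have e3 : |((1 - x) ^ 2)⁻¹| = (1 - x) ^ (-(2:ℝ)) := by
    rw [abs_of_pos (by positivity), ← Real.rpow_natCast (1-x) 2,
      ← Real.rpow_neg hx1.le]
    norm_num
  have e4 : ∀ r s : ℝ, (1-x)^r * (1-x)^s = (1-x)^(r+s) :=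
    fun r s => (Real.rpow_add hx1 r s).symm
  rw [e1, e2, e3, smul_eq_mul, show (1-α)-1 = -α by ring]
  calc (1-x)^(-(2:ℝ)) * (x ^ (-α) * (1-x)^α * (1-x)^((i:ℝ)+1))
      = x ^ (-α) * ((1-x)^α * (1-x)^(((i:ℝ)+1)) * (1-x)^(-(2:ℝ))) := by ring
    _ = x ^ (-α) * (1-x)^(α + ((i:ℝ)+1) + (-2)) := by rw [e4, e4]
    _ = x ^ (-α) * (1-x)^(α + (i:ℝ) - 1) := by
        rw [show α + ((i:ℝ)+1) + (-2) = α + (i:ℝ) - 1 by ring]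

lemma ioi_beta (α : ℝ) (hα0 : 0 < α) (hα1 : α < 1) (i : ℕ) :
    IntegrableOn (fun ω : ℝ => ω ^ (-α) * ((1 + ω) ^ (i+1))⁻¹) (Ioi (0:ℝ)) ∧
    ∫ ω in Ioi (0:ℝ), ω ^ (-α) * ((1 + ω) ^ (i+1))⁻¹ =
      Real.Gamma (1-α) * Real.Gamma (α+i) / Real.Gamma (1+i) := by
  have hderiv : ∀ x ∈ Ioo (0:ℝ) 1, HasDerivWithinAt (fun x : ℝ => x / (1 - x))
      (((1 - x) ^ 2)⁻¹) (Ioo 0 1) x := fun x hx => phi_deriv hx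
  have hii := MeasureTheory.integrableOn_image_iff_integrableOn_abs_deriv_smul
      measurableSet_Ioo hderiv phi_inj (fun ω : ℝ => ω ^ (-α) * ((1 + ω) ^ (i+1))⁻¹)
  have hie := MeasureTheory.integral_image_eq_integral_abs_deriv_smul
      measurableSet_Ioo hderiv phi_inj (fun ω : ℝ => ω ^ (-α) * ((1 + ω) ^ (i+1))⁻¹)
  rw [phi_image] at hii hie
  have hp : 0 < 1 - α := by linarith
  have hq : 0 < α + (i:ℝ) := by positivity
  have hcongr : EqOn (fun x : ℝ => |((1 - x) ^ 2)⁻¹| •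
        ((x / (1 - x)) ^ (-α) * ((1 + x / (1 - x)) ^ (i+1))⁻¹))
      (fun x : ℝ => x ^ ((1 - α) - 1) * (1 - x) ^ ((α + i) - 1)) (Ioo 0 1) :=
    fun x hx => sub_integrand α i hx
  constructor
  · rw [hii]
    exact ((beta_integrable (1-α) (α+i) hp hq).congr_fun
      (fun x hx => (hcongr hx).symm) measurableSet_Ioo)
  · rw [hie, setIntegral_congr_fun measurableSet_Ioo hcongr,
      beta_value (1-α) (α+i) hp hq, show (1:ℝ)-α+(α+↑i) = 1+↑i by ring]

/-- **Balance-form unilateral frequency distributed model.**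
If for each `ω > 0`, `z(ω,·)` satisfies `z(ω,a) = 0` and
`z(ω,k) − z(ω,k−1) = −ω z(ω,k) + √(μ_α(ω)) u(k)` for `k ≥ a+1`, then for every `k ≥ a+1`
the function `ω ↦ √(μ_α(ω)) z(ω,k)` is integrable on `(0,∞)` and
`∫_0^∞ √(μ_α(ω)) z(ω,k) dω = {}_a∇_k^{-α} u(k)`, where `μ_α(ω) = sin(απ)/(π ω^α)`. -/
theorem balance_form_frequency_distributed_model
    (a : ℤ) (α : ℝ) (hα0 : 0 < α) (hα1 : α < 1) (u : ℤ → ℝ)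
    (z : ℝ → ℤ → ℝ)
    (hz0 : ∀ ω : ℝ, 0 < ω → z ω a = 0)
    (hz : ∀ ω : ℝ, 0 < ω → ∀ k : ℤ, a + 1 ≤ k →
      z ω k - z ω (k - 1) =
        -ω * z ω k + Real.sqrt (Real.sin (α * Real.pi) / (Real.pi * ω ^ α)) * u k) :
    ∀ k : ℤ, a + 1 ≤ k →
      MeasureTheory.IntegrableOn
        (fun ω : ℝ => Real.sqrt (Real.sin (α * Real.pi) / (Real.pi * ω ^ α)) * z ω k)
        (Set.Ioi (0 : ℝ)) ∧
      (∫ ω in Set.Ioi (0 : ℝ),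
          Real.sqrt (Real.sin (α * Real.pi) / (Real.pi * ω ^ α)) * z ω k) =
        nablaFracSum a α u k := by
  have hsin : 0 < Real.sin (α * Real.pi) :=
    Real.sin_pos_of_pos_of_lt_pi (by positivity)
      (by nlinarith [Real.pi_pos])
  set c : ℝ → ℝ := fun ω => Real.sqrt (Real.sin (α * Real.pi) / (Real.pi * ω ^ α)) with hc
  -- closed form for z
  have hform : ∀ ω : ℝ, 0 < ω → ∀ k : ℤ, a ≤ k →
      z ω k = ∑ i ∈ Finset.range (k - a).toNat,
        ((1 + ω)⁻¹) ^ (i + 1) * (c ω * u (k - i)) := by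
    intro ω hω k hk
    refine Int.le_induction (motive := fun k _ => z ω k = ∑ i ∈ Finset.range (k - a).toNat,
        ((1 + ω)⁻¹) ^ (i + 1) * (c ω * u (k - i))) ?_ ?_ k hk
    · simp [hz0 ω hω]
    · intro k hk ih
      have h1ω : (1 : ℝ) + ω ≠ 0 := by positivity
      have hrec := hz ω hω (k + 1) (by linarith)
      have hk1 : k + 1 - 1 = k := by ring
      rw [hk1] at hrec
      have hzk1 : z ω (k + 1) = (1 + ω)⁻¹ * (z ω k + c ω * u (k + 1)) := by
        field_simp
        linarith [hrec]
      have hn : (k + 1 - a).toNat = (k - a).toNat + 1 := by omega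
      rw [hzk1, hn, Finset.sum_range_succ', ih]
      rw [mul_add]
      congr 1
      · rw [Finset.mul_sum]
        refine Finset.sum_congr rfl fun i _ => ?_
        have : (k + 1 - (↑(i + 1) : ℤ)) = k - i := by push_cast; ring
        rw [this]
        ring
      · push_cast
        ring
  intro k hk
  set n := (k - a).toNat with hn
  -- pointwise identity on Ioi 0
  have hpt : ∀ ω ∈ Ioi (0:ℝ), c ω * z ω k =
      ∑ i ∈ Finset.range n, (Real.sin (α * Real.pi) / Real.pi * u (k - i)) *
        (ω ^ (-α) * ((1 + ω) ^ (i + 1))⁻¹) := by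
    intro ω hω
    have hωpos : (0:ℝ) < ω := hω
    rw [hform ω hωpos k (by linarith), Finset.mul_sum]
    refine Finset.sum_congr rfl fun i _ => ?_
    have hc2 : c ω * c ω = Real.sin (α * Real.pi) / Real.pi * ω ^ (-α) := by
      have h := Real.mul_self_sqrt
        (show (0:ℝ) ≤ Real.sin (α * Real.pi) / (Real.pi * ω ^ α) by positivity)
      simp only [hc]
      rw [h, Real.rpow_neg hωpos.le]
      ring
    calc c ω * ((1 + ω)⁻¹ ^ (i + 1) * (c ω * u (k - ↑i)))
        = (c ω * c ω) * (((1 + ω) ^ (i + 1))⁻¹ * u (k - ↑i)) := by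
          rw [inv_pow]; ring
      _ = Real.sin (α * Real.pi) / Real.pi * u (k - ↑i) *
            (ω ^ (-α) * ((1 + ω) ^ (i + 1))⁻¹) := by rw [hc2]; ring
  -- integrability of each term
  have hterm : ∀ i : ℕ, IntegrableOn (fun ω : ℝ =>
      (Real.sin (α * Real.pi) / Real.pi * u (k - i)) *
        (ω ^ (-α) * ((1 + ω) ^ (i + 1))⁻¹)) (Ioi (0:ℝ)) :=
    fun i => ((ioi_beta α hα0 hα1 i).1.const_mul _)
  have hsum : IntegrableOn (fun ω : ℝ => ∑ i ∈ Finset.range n,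
      (Real.sin (α * Real.pi) / Real.pi * u (k - i)) *
        (ω ^ (-α) * ((1 + ω) ^ (i + 1))⁻¹)) (Ioi (0:ℝ)) :=
    integrable_finset_sum _ fun i _ => hterm i
  constructor
  · exact hsum.congr_fun (fun ω hω => (hpt ω hω).symm) measurableSet_Ioi
  · rw [setIntegral_congr_fun measurableSet_Ioi hpt,
      MeasureTheory.integral_finset_sum _ fun i _ => hterm i]
    unfold nablaFracSum
    rw [← hn]
    refine Finset.sum_congr rfl fun i _ => ?_
    rw [MeasureTheory.integral_const_mul, (ioi_beta α hα0 hα1 i).2]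
    have hG := Real.Gamma_mul_Gamma_one_sub α
    have hΓα : (0:ℝ) < Real.Gamma α := Real.Gamma_pos_of_pos hα0
    have hΓ1α : (0:ℝ) < Real.Gamma (1 - α) := Real.Gamma_pos_of_pos (by linarith)
    have hΓ1i : (0:ℝ) < Real.Gamma (1 + (i:ℝ)) := Real.Gamma_pos_of_pos (by positivity)
    have hπ := Real.pi_pos
    have hmc : Real.sin (Real.pi * α) = Real.sin (α * Real.pi) := by rw [mul_comm]
    rw [hmc] at hG
    have key : Real.sin (α * Real.pi) / Real.pi = (Real.Gamma α * Real.Gamma (1 - α))⁻¹ := by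
      rw [hG]
      field_simp
    rw [key, show Real.Gamma ((i:ℝ) + 1) = Real.Gamma (1 + (i:ℝ)) by rw [add_comm]]
    field_simp
end

section
/- For every real α with 0 < α < 1 and every complex number s not lying in the closed negative real half-line (-∞, 0], the bilateral identity 1/s^α = 2 ∫_0^{+∞} ω μ_α(ω²)/(s+ω²) dω holds, where s^α denotes the principal branch of the complex power. (This is the identity underlying the bilateral frequency distributed models, obtained from the unilateral one by the substitution ω ↦ ω².) -/
open MeasureTheory Set Filter Metric Complex Topology


lemma freq_aux_cont {α : ℝ} {β : ℝ} :
    ContinuousOn (fun t : ℝ => t ^ (-α) * (1 + t) ^ (-β)) (Ioi 0) := by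
  intro t ht
  have ht' : (0:ℝ) < t := ht
  have h1 : ContinuousAt (fun t : ℝ => t ^ (-α)) t :=
    Real.continuousAt_rpow_const t (-α) (Or.inl (ne_of_gt ht'))
  have h2 : ContinuousAt (fun t : ℝ => (1 + t) ^ (-β)) t := by
    have hadd : ContinuousAt (fun t : ℝ => 1 + t) t := by fun_prop
    exact (Real.continuousAt_rpow_const (1 + t) (-β) (Or.inl (by positivity))).comp hadd
  exact (h1.mul h2).continuousWithinAt

lemma freq_aux_integrable {α : ℝ} (hα0 : 0 < α) (hα1 : α < 1) {β : ℝ} (hβ : 1 ≤ β) :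
    IntegrableOn (fun t : ℝ => t ^ (-α) * (1 + t) ^ (-β)) (Ioi 0) := by
  rw [← Set.Ioc_union_Ioi_eq_Ioi (zero_le_one : (0:ℝ) ≤ 1)]
  refine IntegrableOn.union ?_ ?_
  · have hi : IntegrableOn (fun t : ℝ => t ^ (-α)) (Ioc (0:ℝ) 1) := by
      rw [← intervalIntegrable_iff_integrableOn_Ioc_of_le zero_le_one]
      exact intervalIntegral.intervalIntegrable_rpow' (by linarith)
    refine hi.mono' ((freq_aux_cont.mono Ioc_subset_Ioi_self).aestronglyMeasurable measurableSet_Ioc) ?_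
    rw [ae_restrict_iff' measurableSet_Ioc]
    filter_upwards with t ht
    obtain ⟨ht0, ht1⟩ := ht
    have h1 : (1 + t) ^ (-β) ≤ 1 :=
      Real.rpow_le_one_of_one_le_of_nonpos (by linarith) (by linarith)
    have h2 : (0:ℝ) ≤ t ^ (-α) := Real.rpow_nonneg ht0.le _
    rw [Real.norm_of_nonneg (by positivity)]
    exact mul_le_of_le_one_right h2 h1
  · have hi : IntegrableOn (fun t : ℝ => t ^ (-(α + β))) (Ioi (1:ℝ)) :=
      integrableOn_Ioi_rpow_of_lt (by linarith) one_pos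
    refine hi.mono' ((freq_aux_cont.mono (Ioi_subset_Ioi zero_le_one)).aestronglyMeasurable measurableSet_Ioi) ?_
    rw [ae_restrict_iff' measurableSet_Ioi]
    filter_upwards with t ht
    have ht1 : (1:ℝ) < t := ht
    have ht0 : (0:ℝ) < t := by linarith
    have h1 : (1 + t) ^ (-β) ≤ t ^ (-β) :=
      Real.rpow_le_rpow_of_nonpos ht0 (by linarith) (by linarith)
    have h2 : (0:ℝ) ≤ t ^ (-α) := Real.rpow_nonneg ht0.le _
    rw [Real.norm_of_nonneg (by positivity)]
    calc t ^ (-α) * (1 + t) ^ (-β) ≤ t ^ (-α) * t ^ (-β) :=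
          mul_le_mul_of_nonneg_left h1 h2
      _ = t ^ (-(α + β)) := by rw [← Real.rpow_add ht0]; ring_nf

lemma freq_aux_lower {s₀ : ℂ} (hs₀ : s₀ ∈ slitPlane) :
    ∃ ε > 0, ∃ C > 0, ∀ s ∈ ball s₀ ε, ∀ t : ℝ, 0 < t → 1 + t ≤ C * ‖s + (t : ℂ)‖ := by
  obtain ⟨δ, hδ, hballδ⟩ := Metric.isOpen_iff.mp isOpen_slitPlane s₀ hs₀
  have hεpos : 0 < δ / 2 := by positivity
  set ε := δ / 2 with hεdef
  have hcb : closedBall s₀ ε ⊆ slitPlane :=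
    (closedBall_subset_ball (by rw [hεdef]; linarith)).trans hballδ
  set T : ℝ := 2 * ‖s₀‖ + 2 * ε + 2 with hT
  have hTpos : 0 < T := by positivity
  have hK : IsCompact ((closedBall s₀ ε) ×ˢ (Icc (0:ℝ) T)) :=
    (isCompact_closedBall _ _).prod isCompact_Icc
  have hKne : ((closedBall s₀ ε) ×ˢ (Icc (0:ℝ) T)).Nonempty :=
    ⟨(s₀, 0), mem_prod.mpr ⟨mem_closedBall_self hεpos.le, ⟨le_refl 0, hTpos.le⟩⟩⟩
  have hcont : Continuous (fun p : ℂ × ℝ => ‖p.1 + (p.2 : ℂ)‖) :=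
    (continuous_fst.add (Complex.continuous_ofReal.comp continuous_snd)).norm
  obtain ⟨p, hpK, hpmin⟩ := hK.exists_isMinOn hKne hcont.continuousOn
  set c := ‖p.1 + (p.2 : ℂ)‖ with hc
  have hcpos : 0 < c := by
    rw [hc, norm_pos_iff]
    intro h0
    have hp1 : p.1 ∈ slitPlane := hcb (mem_prod.mp hpK).1
    have hp2 : (0:ℝ) ≤ p.2 := (mem_prod.mp hpK).2.1
    have hp1e : p.1 = ((-p.2 : ℝ) : ℂ) := by push_cast; linear_combination h0
    rw [hp1e, Complex.ofReal_mem_slitPlane] at hp1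
    linarith
  refine ⟨ε, hεpos, max 2 ((1 + T) / c),
    lt_of_lt_of_le two_pos (le_max_left _ _), ?_⟩
  intro s hs t ht
  by_cases htT : t ≤ T
  · have hmem : (s, t) ∈ (closedBall s₀ ε) ×ˢ (Icc (0:ℝ) T) :=
      mem_prod.mpr ⟨ball_subset_closedBall hs, ht.le, htT⟩
    have h1 : c ≤ ‖s + (t:ℂ)‖ := isMinOn_iff.mp hpmin (s, t) hmem
    have h2 : (1 + T) / c ≤ max 2 ((1+T)/c) := le_max_right _ _
    have h2' : (0:ℝ) ≤ (1 + T) / c := by positivity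
    calc 1 + t ≤ 1 + T := by linarith
      _ = ((1+T)/c) * c := (div_mul_cancel₀ _ hcpos.ne').symm
      _ ≤ max 2 ((1+T)/c) * ‖s + (t:ℂ)‖ :=
          mul_le_mul h2 h1 hcpos.le (le_trans h2' h2)
  · push_neg at htT
    have hsn : ‖s - s₀‖ < ε := mem_ball_iff_norm.mp hs
    have hnorm_s : ‖s‖ ≤ ‖s₀‖ + ε := by
      calc ‖s‖ = ‖s₀ + (s - s₀)‖ := by ring_nf
        _ ≤ ‖s₀‖ + ‖s - s₀‖ := norm_add_le _ _
        _ ≤ ‖s₀‖ + ε := by linarith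
    have hlow : t - ‖s‖ ≤ ‖s + (t:ℂ)‖ := by
      have h4 : ‖(t:ℂ)‖ ≤ ‖s + (t:ℂ)‖ + ‖s‖ := by
        calc ‖(t:ℂ)‖ = ‖(s + (t:ℂ)) - s‖ := by ring_nf
          _ ≤ ‖s + (t:ℂ)‖ + ‖s‖ := norm_sub_le _ _
      have h5 : ‖(t:ℂ)‖ = t := by
        rw [Complex.norm_real, Real.norm_of_nonneg ht.le]
      linarith
    have h6 : 1 + t ≤ 2 * ‖s + (t:ℂ)‖ := by
      have : 1 + t ≤ 2 * (t - ‖s‖) := by rw [hT] at htT; linarith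
      linarith
    calc 1 + t ≤ 2 * ‖s + (t:ℂ)‖ := h6
      _ ≤ max 2 ((1+T)/c) * ‖s + (t:ℂ)‖ :=
          mul_le_mul_of_nonneg_right (le_max_left _ _) (norm_nonneg _)

noncomputable def freqF (α : ℝ) (s : ℂ) (t : ℝ) : ℂ := ((t ^ (-α) : ℝ) : ℂ) / (s + (t : ℂ))

noncomputable def freqG (α : ℝ) (s : ℂ) : ℂ := ∫ t in Set.Ioi (0:ℝ), freqF α s t

lemma freq_div_le {a x b C : ℝ} (ha : 0 ≤ a) (hx : 0 < x) (hb : 0 < b) (h : b ≤ C * x) :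
    a / x ≤ a * (C / b) := by
  have h1 : 1 / x ≤ C / b := by
    rw [div_le_div_iff₀ hx hb]; linarith
  calc a / x = a * (1 / x) := by ring
    _ ≤ a * (C / b) := mul_le_mul_of_nonneg_left h1 ha

lemma freqF_contOn {α : ℝ} {s : ℂ} (h : ∀ t : ℝ, 0 < t → s + (t:ℂ) ≠ 0) :
    ContinuousOn (freqF α s) (Ioi 0) := by
  intro t ht
  have ht' : (0:ℝ) < t := ht
  have h1 : ContinuousAt (fun u : ℝ => ((u ^ (-α) : ℝ) : ℂ)) t :=
    Complex.continuous_ofReal.continuousAt.comp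
      (Real.continuousAt_rpow_const t (-α) (Or.inl (ne_of_gt ht')))
  have h2 : ContinuousAt (fun u : ℝ => s + (u : ℂ)) t := by fun_prop
  exact (h1.div h2 (h t ht')).continuousWithinAt

lemma freqF_norm {α : ℝ} {s : ℂ} {t : ℝ} (ht : 0 < t) :
    ‖freqF α s t‖ = t ^ (-α) / ‖s + (t:ℂ)‖ := by
  rw [freqF, norm_div, Complex.norm_real, Real.norm_of_nonneg (Real.rpow_nonneg ht.le _)]

lemma freq_deriv {α : ℝ} (hα0 : 0 < α) (hα1 : α < 1) {s₀ : ℂ} (hs₀ : s₀ ∈ slitPlane) :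
    Integrable (freqF α s₀) (volume.restrict (Ioi 0)) ∧ DifferentiableAt ℂ (freqG α) s₀ := by
  obtain ⟨ε, hε, C, hC, hbd⟩ := freq_aux_lower hs₀
  have hne : ∀ s ∈ ball s₀ ε, ∀ t : ℝ, 0 < t → s + (t:ℂ) ≠ 0 := by
    intro s hs t ht h0
    have := hbd s hs t ht
    rw [h0, norm_zero, mul_zero] at this
    linarith
  have hnormpos : ∀ s ∈ ball s₀ ε, ∀ t : ℝ, 0 < t → 0 < ‖s + (t:ℂ)‖ := fun s hs t ht =>
    norm_pos_iff.mpr (hne s hs t ht)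
  have hs₀ball : s₀ ∈ ball s₀ ε := mem_ball_self hε
  -- integrable at s₀
  have hint : Integrable (freqF α s₀) (volume.restrict (Ioi 0)) := by
    refine ((freq_aux_integrable hα0 hα1 (le_refl 1)).const_mul C).mono'
      ((freqF_contOn (hne s₀ hs₀ball)).aestronglyMeasurable measurableSet_Ioi) ?_
    rw [ae_restrict_iff' measurableSet_Ioi]
    filter_upwards with t ht
    have ht' : (0:ℝ) < t := ht
    rw [freqF_norm ht']
    have h1 := freq_div_le (Real.rpow_nonneg ht'.le (-α)) (hnormpos s₀ hs₀ball t ht')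
      (by positivity : (0:ℝ) < 1 + t) (hbd s₀ hs₀ball t ht')
    calc t ^ (-α) / ‖s₀ + (t:ℂ)‖ ≤ t ^ (-α) * (C / (1 + t)) := h1
      _ = C * (t ^ (-α) * (1 + t) ^ (-1:ℝ)) := by
          rw [Real.rpow_neg_one]; ring
  refine ⟨hint, ?_⟩
  -- derivative data
  set F' : ℂ → ℝ → ℂ := fun s t => -(((t ^ (-α) : ℝ) : ℂ) / (s + (t:ℂ)) ^ 2) with hF'def
  have key := hasDerivAt_integral_of_dominated_loc_of_deriv_le (μ := volume.restrict (Ioi 0))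
    (F := fun s t => freqF α s t) (F' := F')
    (x₀ := s₀) (bound := fun t => C^2 * (t ^ (-α) * (1 + t) ^ (-2:ℝ))) (ball_mem_nhds s₀ hε)
    ?_ hint ?_ ?_ ?_ ?_
  · exact key.2.differentiableAt
  · filter_upwards [ball_mem_nhds s₀ hε] with s hs using
      (freqF_contOn (hne s hs)).aestronglyMeasurable measurableSet_Ioi
  · -- measurability of F' s₀
    refine ContinuousOn.aestronglyMeasurable ?_ measurableSet_Ioi
    intro t ht
    have ht' : (0:ℝ) < t := ht
    have h1 : ContinuousAt (fun u : ℝ => ((u ^ (-α) : ℝ) : ℂ)) t :=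
      Complex.continuous_ofReal.continuousAt.comp
        (Real.continuousAt_rpow_const t (-α) (Or.inl (ne_of_gt ht')))
    have h2 : ContinuousAt (fun u : ℝ => (s₀ + (u:ℂ)) ^ 2) t := by fun_prop
    exact ((h1.div h2 (pow_ne_zero 2 (hne s₀ hs₀ball t ht'))).neg).continuousWithinAt
  · -- bound for F'
    rw [ae_restrict_iff' measurableSet_Ioi]
    filter_upwards with t ht s hs
    have ht' : (0:ℝ) < t := ht
    have hb := hbd s hs t ht'
    have hp := hnormpos s hs t ht'
    have hnorm : ‖F' s t‖ = t ^ (-α) / ‖s + (t:ℂ)‖ ^ 2 := by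
      rw [hF'def]
      simp only [norm_neg, norm_div, norm_pow, Complex.norm_real,
        Real.norm_of_nonneg (Real.rpow_nonneg ht'.le _)]
    rw [hnorm]
    have hb2 : (1 + t) ^ 2 ≤ C ^ 2 * ‖s + (t:ℂ)‖ ^ 2 := by nlinarith [norm_nonneg (s + (t:ℂ))]
    have h1 := freq_div_le (Real.rpow_nonneg ht'.le (-α)) (pow_pos hp 2)
      (by positivity : (0:ℝ) < (1 + t) ^ 2) hb2
    calc t ^ (-α) / ‖s + (t:ℂ)‖ ^ 2 ≤ t ^ (-α) * (C ^ 2 / (1 + t) ^ 2) := h1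
      _ = C ^ 2 * (t ^ (-α) * (1 + t) ^ (-2:ℝ)) := by
          rw [show ((-2:ℝ)) = ((-2:ℤ):ℝ) by norm_num, Real.rpow_intCast]
          rw [zpow_neg, show ((2:ℤ)) = ((2:ℕ):ℤ) by norm_num, zpow_natCast]
          ring
  · exact (freq_aux_integrable hα0 hα1 (by norm_num : (1:ℝ) ≤ 2)).const_mul _
  · -- differentiability in s
    rw [ae_restrict_iff' measurableSet_Ioi]
    filter_upwards with t ht s hs
    have ht' : (0:ℝ) < t := ht
    have hden : s + (t:ℂ) ≠ 0 := hne s hs t ht'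
    have hd : HasDerivAt (fun s : ℂ => s + (t:ℂ)) 1 s := (hasDerivAt_id s).add_const _
    have := (hasDerivAt_const s ((t ^ (-α) : ℝ) : ℂ)).div hd hden
    refine this.congr_deriv ?_
    rw [hF'def]
    field_simp
    ring

lemma freqI {α : ℝ} (hα0 : 0 < α) (hα1 : α < 1) :
    (∫ x in Ioi (0:ℝ), freqF α 1 x) = ((Real.pi / Real.sin (Real.pi * α) : ℝ) : ℂ) := by
  -- substitution x ↦ x / (1 - x) from Ioo 0 1 onto Ioi 0
  have himg : (fun x : ℝ => x / (1 - x)) '' Ioo 0 1 = Ioi 0 := by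
    ext y
    constructor
    · rintro ⟨x, ⟨hx0, hx1⟩, rfl⟩
      exact div_pos hx0 (by linarith)
    · intro hy
      have hy' : (0:ℝ) < y := hy
      refine ⟨y / (1 + y), ⟨by positivity, ?_⟩, ?_⟩
      · rw [div_lt_one (by positivity)]; linarith
      · field_simp
        ring
  have hderiv : ∀ x ∈ Ioo (0:ℝ) 1,
      HasDerivWithinAt (fun x : ℝ => x / (1 - x)) (((1 - x) ^ 2)⁻¹) (Ioo 0 1) x := by
    intro x hx
    have hx1 : 1 - x ≠ 0 := ne_of_gt (by linarith [hx.2] : (0:ℝ) < 1 - x)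
    have hd := (hasDerivAt_id x).div ((hasDerivAt_id x).const_sub 1) hx1
    simp only [id] at hd
    refine HasDerivAt.hasDerivWithinAt ?_
    refine hd.congr_deriv ?_
    field_simp
    ring
  have hinj : InjOn (fun x : ℝ => x / (1 - x)) (Ioo 0 1) := by
    intro a ha b hb h
    have ha1 : 1 - a ≠ 0 := by intro h'; have := ha.2; linarith [sub_eq_zero.mp h']
    have hb1 : 1 - b ≠ 0 := by intro h'; have := hb.2; linarith [sub_eq_zero.mp h']
    field_simp at h
    linarith
  have hsub := integral_image_eq_integral_abs_deriv_smul measurableSet_Ioo hderiv hinj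
    (fun y : ℝ => freqF α 1 y)
  rw [himg] at hsub
  rw [hsub]
  -- simplify the integrand on Ioo 0 1
  have hcongr : ∀ x ∈ Ioo (0:ℝ) 1,
      |((1 - x) ^ 2)⁻¹| • freqF α 1 (x / (1 - x)) =
        ((x ^ (-α) * (1 - x) ^ (α - 1) : ℝ) : ℂ) := by
    intro x hx
    obtain ⟨hx0, hx1⟩ := hx
    have h1x : (0:ℝ) < 1 - x := by linarith
    have hrpow : (x / (1 - x)) ^ (-α) = x ^ (-α) * (1 - x) ^ α := by
      rw [Real.div_rpow hx0.le h1x.le, Real.rpow_neg h1x.le, div_eq_mul_inv, inv_inv]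
    have hcne : (1:ℂ) - (x:ℂ) ≠ 0 := by
      rw [show (1:ℂ) - (x:ℂ) = ((1 - x : ℝ) : ℂ) by push_cast; ring]
      exact_mod_cast h1x.ne'
    have hden : (1:ℂ) + ((x / (1 - x) : ℝ) : ℂ) = ((1 - x)⁻¹ : ℝ) := by
      push_cast
      field_simp
      ring
    rw [freqF, hrpow, hden, abs_of_pos (by positivity)]
    rw [Complex.real_smul]
    rw [← Complex.ofReal_div, ← Complex.ofReal_mul]
    congr 1
    rw [show α - 1 = α - 1 from rfl, Real.rpow_sub h1x, Real.rpow_one]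
    field_simp
  rw [setIntegral_congr_fun measurableSet_Ioo hcongr]
  -- identify with the Beta integral
  have hbeta1 : Complex.betaIntegral (1 - (α:ℂ)) (α:ℂ) =
      ∫ x in Ioo (0:ℝ) 1, ((x ^ (-α) * (1 - x) ^ (α - 1) : ℝ) : ℂ) := by
    rw [Complex.betaIntegral, intervalIntegral.integral_of_le zero_le_one,
      integral_Ioc_eq_integral_Ioo]
    refine setIntegral_congr_fun measurableSet_Ioo fun x hx => ?_
    obtain ⟨hx0, hx1⟩ := hx
    have h1x : (0:ℝ) < 1 - x := by linarith
    rw [Complex.ofReal_mul, Complex.ofReal_cpow hx0.le, Complex.ofReal_cpow h1x.le]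
    push_cast
    ring_nf
  rw [← hbeta1]
  -- evaluate the Beta integral
  have hre1 : 0 < (1 - (α:ℂ)).re := by simp; linarith
  have hre2 : 0 < ((α:ℂ)).re := by simpa using hα0
  have hval := Complex.Gamma_mul_Gamma_eq_betaIntegral hre1 hre2
  rw [sub_add_cancel, Complex.Gamma_one, one_mul] at hval
  rw [← hval, mul_comm, Complex.Gamma_mul_Gamma_one_sub]
  rw [Complex.ofReal_div, Complex.ofReal_sin]
  push_cast
  ring_nf

lemma freqG_base {α : ℝ} (hα0 : 0 < α) (hα1 : α < 1) {r : ℝ} (hr : 0 < r) :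
    freqG α (r : ℂ) = ((Real.pi / Real.sin (Real.pi * α) : ℝ) : ℂ) * (r:ℂ) ^ (-(α:ℂ)) := by
  have hr0 : (r:ℂ) ≠ 0 := by exact_mod_cast hr.ne'
  have hscale := MeasureTheory.integral_comp_mul_left_Ioi (fun x : ℝ => freqF α r x) 0 hr
  rw [mul_zero] at hscale
  have hcongr : ∀ x ∈ Ioi (0:ℝ), freqF α (r:ℂ) (r * x) =
      ((r ^ (-α) : ℝ) : ℂ) * (r:ℂ)⁻¹ * freqF α 1 x := by
    intro x hx
    have hx' : (0:ℝ) < x := hx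
    have h1x : (1:ℂ) + (x:ℂ) ≠ 0 := by
      rw [show (1:ℂ) + (x:ℂ) = ((1 + x : ℝ) : ℂ) by push_cast; ring]
      exact_mod_cast (by positivity : (1 + x : ℝ) ≠ 0)
    have hrx : (r:ℂ) + (r:ℂ) * (x:ℂ) ≠ 0 := by
      rw [show (r:ℂ) + (r:ℂ) * (x:ℂ) = ((r + r * x : ℝ) : ℂ) by push_cast; ring]
      exact_mod_cast (by positivity : (r + r * x : ℝ) ≠ 0)
    rw [freqF, freqF, Real.mul_rpow hr.le hx'.le]
    push_cast
    field_simp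
  rw [setIntegral_congr_fun measurableSet_Ioi hcongr] at hscale
  rw [MeasureTheory.integral_const_mul, freqI hα0 hα1] at hscale
  have this1 : r • (((r ^ (-α) : ℝ) : ℂ) * (r:ℂ)⁻¹ *
      ((Real.pi / Real.sin (Real.pi * α) : ℝ) : ℂ)) = freqG α (r:ℂ) := by
    rw [freqG, hscale, smul_smul, mul_inv_cancel₀ hr.ne', one_smul]
  rw [← this1, Complex.real_smul]
  rw [show (r:ℂ) * (((r ^ (-α) : ℝ) : ℂ) * (r:ℂ)⁻¹ *
        ((Real.pi / Real.sin (Real.pi * α) : ℝ) : ℂ)) =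
      ((r:ℂ) * (r:ℂ)⁻¹) * (((r ^ (-α) : ℝ) : ℂ) *
        ((Real.pi / Real.sin (Real.pi * α) : ℝ) : ℂ)) by ring,
    mul_inv_cancel₀ hr0, one_mul, Complex.ofReal_cpow hr.le (-α)]
  push_cast
  ring

lemma freqG_eq {α : ℝ} (hα0 : 0 < α) (hα1 : α < 1) {s : ℂ} (hs : s ∈ slitPlane) :
    freqG α s = ((Real.pi / Real.sin (Real.pi * α) : ℝ) : ℂ) * s ^ (-(α:ℂ)) := by
  have hG : AnalyticOnNhd ℂ (freqG α) slitPlane :=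
    DifferentiableOn.analyticOnNhd
      (fun z hz => ((freq_deriv hα0 hα1 hz).2).differentiableWithinAt)
      Complex.isOpen_slitPlane
  have hH : AnalyticOnNhd ℂ
      (fun z => ((Real.pi / Real.sin (Real.pi * α) : ℝ) : ℂ) * z ^ (-(α:ℂ))) slitPlane := by
    intro z hz
    exact analyticAt_const.mul ((analyticAt_id.cpow analyticAt_const) hz)
  have hpre : IsPreconnected slitPlane := by
    have h1 : IsPathConnected slitPlane := by
      refine isPathConnected_iff.mpr ⟨⟨1, one_mem_slitPlane⟩, fun x hx y hy => ?_⟩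
      have hx1 : JoinedIn slitPlane x 1 := JoinedIn.of_segment_subset
        (by rw [segment_symm]; exact starConvex_one_slitPlane.segment_subset hx)
      have h1y : JoinedIn slitPlane 1 y := JoinedIn.of_segment_subset
        (starConvex_one_slitPlane.segment_subset hy)
      exact hx1.trans h1y
    exact h1.isConnected.isPreconnected
  have hseq : Tendsto (fun n : ℕ => ((1 + ((n:ℝ)+1)⁻¹ : ℝ) : ℂ)) atTop (𝓝[≠] (1:ℂ)) := by
    apply tendsto_nhdsWithin_of_tendsto_nhds_of_eventually_within
    · have h0 : Tendsto (fun n : ℕ => ((n:ℝ)+1)⁻¹) atTop (𝓝 0) := by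
        simpa using tendsto_one_div_add_atTop_nhds_zero_nat (𝕜 := ℝ)
      have h1 : Tendsto (fun n : ℕ => (1 + ((n:ℝ)+1)⁻¹ : ℝ)) atTop (𝓝 1) := by
        simpa using tendsto_const_nhds.add h0
      have h2 := (Complex.continuous_ofReal.tendsto 1).comp h1
      rw [show ((1:ℝ):ℂ) = (1:ℂ) by norm_num] at h2
      exact h2
    · filter_upwards with n
      simp only [mem_compl_iff, mem_singleton_iff]
      intro h
      have : (1 + ((n:ℝ)+1)⁻¹ : ℝ) = 1 := by exact_mod_cast h
      have hp : (0:ℝ) < ((n:ℝ)+1)⁻¹ := by positivity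
      linarith
  have hfreq : ∃ᶠ z in 𝓝[≠] (1:ℂ),
      freqG α z = ((Real.pi / Real.sin (Real.pi * α) : ℝ) : ℂ) * z ^ (-(α:ℂ)) := by
    apply hseq.frequently
    apply Frequently.of_forall
    intro n
    exact freqG_base hα0 hα1 (by positivity : (0:ℝ) < 1 + ((n:ℝ)+1)⁻¹)
  exact hG.eqOn_of_preconnected_of_frequently_eq hH hpre one_mem_slitPlane hfreq hs

/-- **Bilateral frequency distributed identity.**
For `0 < α < 1` and `s ∈ ℂ \ (-∞, 0]`,
`1/s^α = 2 ∫_0^∞ ω μ_α(ω²)/(s+ω²) dω`, where `μ_α(ω) = sin(απ)/(π ω^α)` and `s^α` is the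
principal complex power. -/
theorem bilateral_frequency_distributed_identity
    (α : ℝ) (hα0 : 0 < α) (hα1 : α < 1) (s : ℂ)
    (hs : ∀ x : ℝ, x ≤ 0 → s ≠ (x : ℂ)) :
    1 / s ^ (α : ℂ) =
      2 * ∫ ω in Set.Ioi (0 : ℝ),
        ((ω * (Real.sin (α * Real.pi) / (Real.pi * (ω ^ 2) ^ α)) : ℝ) : ℂ) /
          (s + (ω : ℂ) ^ 2) := by
  have hsmem : s ∈ slitPlane := by
    rw [Complex.mem_slitPlane_iff]
    by_contra h
    push_neg at h
    obtain ⟨h1, h2⟩ := h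
    exact hs s.re h1 (by apply Complex.ext <;> simp [h2])
  have hπ : (0:ℝ) < Real.pi := Real.pi_pos
  have hsin : Real.sin (Real.pi * α) ≠ 0 :=
    ne_of_gt (Real.sin_pos_of_pos_of_lt_pi (by positivity)
      (by nlinarith))
  -- substitution ω ↦ ω²
  set f : ℝ → ℂ := fun t => ((Real.sin (α * Real.pi) / (Real.pi * t ^ α) : ℝ) : ℂ) / (s + (t:ℂ))
    with hfdef
  have hsubst := MeasureTheory.integral_comp_rpow_Ioi f (by norm_num : (2:ℝ) ≠ 0)
  have hstep1 : 2 * (∫ ω in Set.Ioi (0 : ℝ),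
      ((ω * (Real.sin (α * Real.pi) / (Real.pi * (ω ^ 2) ^ α)) : ℝ) : ℂ) /
        (s + (ω : ℂ) ^ 2)) = ∫ t in Ioi (0:ℝ), f t := by
    rw [← hsubst, ← MeasureTheory.integral_const_mul]
    refine setIntegral_congr_fun measurableSet_Ioi fun x hx => ?_
    have hx' : (0:ℝ) < x := hx
    have hx2 : x ^ ((2:ℝ)) = x ^ (2:ℕ) := by
      rw [show ((2:ℝ)) = ((2:ℕ):ℝ) by norm_num, Real.rpow_natCast]
    have hx1 : x ^ ((2:ℝ) - 1) = x := by
      norm_num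
    rw [hfdef]
    simp only [hx2, hx1]
    rw [Complex.real_smul]
    push_cast [_root_.abs_of_nonneg (by norm_num : (0:ℝ) ≤ 2)]
    ring
  rw [hstep1]
  -- pull out the constant
  have hstep2 : (∫ t in Ioi (0:ℝ), f t) =
      (Real.sin (α * Real.pi) / Real.pi : ℝ) • freqG α s := by
    rw [freqG, ← integral_smul]
    refine setIntegral_congr_fun measurableSet_Ioi fun t ht => ?_
    have ht' : (0:ℝ) < t := ht
    have hr : (Real.sin (α * Real.pi) / (Real.pi * t ^ α) : ℝ) =
        (Real.sin (α * Real.pi) / Real.pi) * t ^ (-α) := by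
      rw [Real.rpow_neg ht'.le]
      field_simp
    rw [hfdef, freqF, Complex.real_smul]
    simp only [hr, Complex.ofReal_mul]
    rw [mul_div_assoc]
  rw [hstep2, freqG_eq hα0 hα1 hsmem, Complex.real_smul]
  rw [← mul_assoc, ← Complex.ofReal_mul]
  rw [show Real.sin (α * Real.pi) / Real.pi * (Real.pi / Real.sin (Real.pi * α)) = 1 by
    rw [mul_comm α Real.pi]; field_simp]
  rw [Complex.ofReal_one, one_mul, Complex.cpow_neg, one_div]
end

section
/- Let a be an integer, α a real number with 0 < α < 1, and u : ℤ → ℝ with u(k) = 0 for k ≤ a. For each ω > 0 let z(ω, ·) : ℤ → ℝ satisfy z(ω, a) = 0 and z(ω, k) − z(ω, k−1) = −ω z(ω, k) + u(k) for k ≥ a+1, and define y(k) = ∫_0^{+∞} μ_α(ω) z(ω, k) dω for k ≥ a+1 with y(a) = 0. Then y satisfies the Caputo fractional difference equation {}_a∇_k^{α} y(k) = u(k) for every integer k ≥ a+1. (The frequency distributed model with zero initial state realizes the fractional difference equation.) -/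
/-- The nabla Caputo fractional difference of order `0 < α < 1`:
`{}_a∇_k^{α} y(k) = {}_a∇_k^{-(1−α)} (∇y)(k)`, where `∇y(k) = y(k) − y(k−1)`. -/
noncomputable def nablaCaputoDiff (a : ℤ) (α : ℝ) (y : ℤ → ℝ) (k : ℤ) : ℝ :=
  nablaFracSum a (1 - α) (fun j => y j - y (j - 1)) k

open Finset Set MeasureTheory

namespace FDM

/-! ### Discrete coefficients -/

noncomputable def d (α : ℝ) (m : ℕ) : ℝ :=
  Real.Gamma (α + m) / (Real.Gamma α * Real.Gamma (m + 1))

lemma d_zero {α : ℝ} (hα : 0 < α) : d α 0 = 1 := by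
  simp [d, Real.Gamma_one, (Real.Gamma_pos_of_pos hα).ne']

lemma Gamma_nat_pos (m : ℕ) : 0 < Real.Gamma ((m : ℝ) + 1) := by
  rw [Real.Gamma_nat_eq_factorial]
  positivity

lemma d_rec {α : ℝ} (hα : 0 < α) (m : ℕ) :
    ((m : ℝ) + 1) * d α (m + 1) = ((m : ℝ) + α) * d α m := by
  have h1 : Real.Gamma (α + (m + 1 : ℕ)) = (α + m) * Real.Gamma (α + m) := by
    have : α + m ≠ 0 := by positivity
    rw [show (α + ((m : ℕ) + 1 : ℕ) : ℝ) = (α + m) + 1 by push_cast; ring,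
      Real.Gamma_add_one this]
  have h2 : Real.Gamma (((m + 1 : ℕ) : ℝ) + 1) = ((m : ℝ) + 1) * Real.Gamma ((m : ℝ) + 1) := by
    have : ((m : ℝ) + 1) ≠ 0 := by positivity
    rw [show (((m + 1 : ℕ) : ℝ) + 1) = ((m : ℝ) + 1) + 1 by push_cast; ring,
      Real.Gamma_add_one this]
  have hΓα : Real.Gamma α ≠ 0 := (Real.Gamma_pos_of_pos hα).ne'
  have hΓm : Real.Gamma ((m : ℝ) + 1) ≠ 0 := (Gamma_nat_pos m).ne'
  have hm1 : ((m : ℝ) + 1) ≠ 0 := by positivity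
  rw [d, d, h1, h2]
  field_simp
  ring

/-- discrete Chu–Vandermonde for `β + γ = 1`. -/
lemma vand {α : ℝ} (hα0 : 0 < α) (hα1 : α < 1) :
    ∀ N : ℕ, ∑ i ∈ range (N + 1), d (1 - α) i * d α (N - i) = 1 := by
  have hβ : 0 < 1 - α := by linarith
  intro N
  induction N with
  | zero => simp [d_zero hβ, d_zero hα0]
  | succ N IH =>
    have key : ((N : ℝ) + 1) * ∑ i ∈ range (N + 2), d (1 - α) i * d α (N + 1 - i)
        = ((N : ℝ) + 1) * ∑ i ∈ range (N + 1), d (1 - α) i * d α (N - i) := by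
      have split : ∀ i ∈ range (N + 2),
          ((N : ℝ) + 1) * (d (1 - α) i * d α (N + 1 - i))
          = (i : ℝ) * (d (1 - α) i * d α (N + 1 - i))
            + ((N + 1 - i : ℕ) : ℝ) * (d (1 - α) i * d α (N + 1 - i)) := by
        intro i hi
        rw [Finset.mem_range] at hi
        have : ((N + 1 - i : ℕ) : ℝ) = (N : ℝ) + 1 - i := by
          have : i ≤ N + 1 := by omega
          push_cast [Nat.cast_sub this]
          ring
        rw [this]; ring
      rw [mul_sum, sum_congr rfl split, sum_add_distrib]
      have h1 : ∑ i ∈ range (N + 2), (i : ℝ) * (d (1 - α) i * d α (N + 1 - i))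
          = ∑ i ∈ range (N + 1), ((i : ℝ) + 1 - α) * (d (1 - α) i * d α (N - i)) := by
        rw [Finset.sum_range_succ']
        simp only [Nat.cast_zero, zero_mul, add_zero]
        refine sum_congr rfl fun i hi => ?_
        have hsub : N + 1 - (i + 1) = N - i := by omega
        rw [hsub]
        have := d_rec hβ i
        push_cast
        calc ((i : ℝ) + 1) * (d (1 - α) (i + 1) * d α (N - i))
            = (((i : ℝ) + 1) * d (1 - α) (i + 1)) * d α (N - i) := by ring
          _ = (((i : ℝ) + (1 - α)) * d (1 - α) i) * d α (N - i) := by rw [this]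
          _ = ((i : ℝ) + 1 - α) * (d (1 - α) i * d α (N - i)) := by ring
      have h2 : ∑ i ∈ range (N + 2), ((N + 1 - i : ℕ) : ℝ) * (d (1 - α) i * d α (N + 1 - i))
          = ∑ i ∈ range (N + 1), (((N - i : ℕ) : ℝ) + α) * (d (1 - α) i * d α (N - i)) := by
        rw [Finset.sum_range_succ]
        simp only [Nat.sub_self, Nat.cast_zero, zero_mul, add_zero]
        refine sum_congr rfl fun i hi => ?_
        rw [Finset.mem_range] at hi
        have hsub1 : N + 1 - i = (N - i) + 1 := by omega
        rw [hsub1]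
        have := d_rec hα0 (N - i)
        push_cast
        calc (((N - i : ℕ) : ℝ) + 1) * (d (1 - α) i * d α ((N - i) + 1))
            = ((((N - i : ℕ) : ℝ) + 1) * d α ((N - i) + 1)) * d (1 - α) i := by ring
          _ = ((((N - i : ℕ) : ℝ) + α) * d α (N - i)) * d (1 - α) i := by rw [this]
          _ = (((N - i : ℕ) : ℝ) + α) * (d (1 - α) i * d α (N - i)) := by ring
      rw [h1, h2, ← sum_add_distrib, mul_sum]
      refine sum_congr rfl fun i hi => ?_
      rw [Finset.mem_range] at hi
      have : ((N - i : ℕ) : ℝ) = (N : ℝ) - i := by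
        have : i ≤ N := by omega
        push_cast [Nat.cast_sub this]; ring
      rw [this]; ring
    have hNe : ((N : ℝ) + 1) ≠ 0 := by positivity
    rw [IH, mul_one] at key
    exact mul_left_cancel₀ hNe (key.trans (mul_one _).symm)

/-- coefficients of the `(1-x)^{1-α}` series: `e 0 = 1`, `e (m+1) = d α (m+1) - d α m`. -/
noncomputable def e (α : ℝ) : ℕ → ℝ
  | 0 => 1
  | (m + 1) => d α (m + 1) - d α m

lemma delta {α : ℝ} (hα0 : 0 < α) (hα1 : α < 1) (N : ℕ) :
    ∑ i ∈ range (N + 1), d (1 - α) i * e α (N - i) = if N = 0 then 1 else 0 := by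
  have hβ : 0 < 1 - α := by linarith
  cases N with
  | zero => simp [e, d_zero hβ]
  | succ N =>
    simp only [Nat.succ_ne_zero, if_false]
    have expand : ∑ i ∈ range (N + 2), d (1 - α) i * e α (N + 1 - i)
        = ∑ i ∈ range (N + 2), d (1 - α) i * d α (N + 1 - i)
          - ∑ i ∈ range (N + 1), d (1 - α) i * d α (N - i) := by
      rw [Finset.sum_range_succ (f := fun i => d (1 - α) i * e α (N + 1 - i)),
        Finset.sum_range_succ (f := fun i => d (1 - α) i * d α (N + 1 - i))]
      have : ∀ i ∈ range (N + 1),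
          d (1 - α) i * e α (N + 1 - i)
          = d (1 - α) i * d α (N + 1 - i) - d (1 - α) i * d α (N - i) := by
        intro i hi
        rw [Finset.mem_range] at hi
        have hsub : N + 1 - i = (N - i) + 1 := by omega
        rw [hsub, e, mul_sub]
      rw [sum_congr rfl this, sum_sub_distrib]
      simp only [e, Nat.sub_self, d_zero hα0, mul_one]
      ring
    rw [expand, vand hα0 hα1, vand hα0 hα1]
    ring

/-! ### The fractional sum and its nabla difference -/

lemma fracSum_def (a : ℤ) (α : ℝ) (u : ℤ → ℝ) (k : ℤ) :
    nablaFracSum a α u k = ∑ i ∈ range (k - a).toNat, d α i * u (k - (i : ℕ)) := rfl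

lemma fracSum_nabla (a : ℤ) {α : ℝ} (hα0 : 0 < α) (u : ℤ → ℝ) {j : ℤ} (hj : a + 1 ≤ j) :
    nablaFracSum a α u j - nablaFracSum a α u (j - 1)
      = ∑ m ∈ range (j - a).toNat, e α m * u (j - (m : ℕ)) := by
  obtain ⟨n, hn⟩ : ∃ n : ℕ, (j - 1 - a).toNat = n := ⟨_, rfl⟩
  have h1 : (j - a).toNat = n + 1 := by omega
  rw [fracSum_def, fracSum_def, h1, hn,
    Finset.sum_range_succ' (fun i : ℕ => d α i * u (j - (i : ℕ))) n,
    Finset.sum_range_succ' (fun m : ℕ => e α m * u (j - (m : ℕ))) n]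
  have hterm : ∀ i ∈ range n,
      e α (i + 1) * u (j - ((i + 1 : ℕ) : ℤ))
      = d α (i + 1) * u (j - ((i + 1 : ℕ) : ℤ)) - d α i * u (j - 1 - (i : ℕ)) := by
    intro i _
    have h : j - 1 - ((i : ℕ) : ℤ) = j - ((i + 1 : ℕ) : ℤ) := by push_cast; ring
    rw [h, e]; ring
  rw [sum_congr rfl hterm, sum_sub_distrib, d_zero hα0]
  show (∑ i ∈ range n, d α (i + 1) * u (j - ((i+1:ℕ) : ℤ)) + 1 * u (j - ((0:ℕ) : ℤ)))
      - ∑ i ∈ range n, d α i * u (j - 1 - (i : ℕ))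
    = (∑ i ∈ range n, d α (i + 1) * u (j - ((i+1:ℕ):ℤ)) - ∑ i ∈ range n, d α i * u (j - 1 - (i:ℕ)))
      + e α 0 * u (j - ((0:ℕ) : ℤ))
  have : e α 0 = 1 := rfl
  rw [this]; ring

/-- The composition rule: the Caputo difference of the `α`-th fractional sum recovers `u`. -/
lemma caputo_fracSum (a : ℤ) {α : ℝ} (hα0 : 0 < α) (hα1 : α < 1) (u : ℤ → ℝ)
    {k : ℤ} (hk : a + 1 ≤ k) :
    nablaCaputoDiff a α (nablaFracSum a α u) k = u k := by
  have hβ : 0 < 1 - α := by linarith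
  obtain ⟨n, hn⟩ : ∃ n : ℕ, (k - a).toNat = n := ⟨_, rfl⟩
  have hn1 : 1 ≤ n := by omega
  rw [nablaCaputoDiff, fracSum_def, hn]
  have step1 : ∀ i ∈ range n,
      d (1 - α) i *
        ((fun j => nablaFracSum a α u j - nablaFracSum a α u (j - 1)) (k - (i : ℕ)))
      = ∑ s ∈ Finset.Ico i n, d (1 - α) i * (e α (s - i) * u (k - (s : ℕ))) := by
    intro i hi
    rw [Finset.mem_range] at hi
    have hki : a + 1 ≤ k - (i : ℕ) := by omega
    simp only
    rw [fracSum_nabla a hα0 u hki]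
    have htn : (k - (i : ℕ) - a).toNat = n - i := by omega
    rw [htn, Finset.sum_Ico_eq_sum_range]
    rw [mul_sum]
    refine sum_congr rfl fun m hm => ?_
    have h1 : i + m - i = m := by omega
    have h2 : k - (i : ℕ) - ((m : ℕ) : ℤ) = k - ((i + m : ℕ) : ℤ) := by push_cast; ring
    rw [h1, h2]
  rw [sum_congr rfl step1, Finset.range_eq_Ico, Finset.sum_Ico_Ico_comm]
  have step2 : ∀ s ∈ Finset.Ico 0 n,
      ∑ i ∈ Finset.Ico 0 (s + 1), d (1 - α) i * (e α (s - i) * u (k - (s : ℕ)))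
      = (if s = 0 then 1 else 0) * u (k - (s : ℕ)) := by
    intro s _
    rw [← Finset.range_eq_Ico]
    calc ∑ i ∈ range (s + 1), d (1 - α) i * (e α (s - i) * u (k - (s : ℕ)))
        = (∑ i ∈ range (s + 1), d (1 - α) i * e α (s - i)) * u (k - (s : ℕ)) := by
          rw [sum_mul]; exact sum_congr rfl fun i _ => by ring
      _ = (if s = 0 then 1 else 0) * u (k - (s : ℕ)) := by rw [delta hα0 hα1 s]
  rw [sum_congr rfl step2]
  rw [← Finset.range_eq_Ico]
  have : ∀ s ∈ range n, (if s = 0 then (1:ℝ) else 0) * u (k - (s : ℕ))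
      = if s = 0 then u (k - (s : ℕ)) else 0 := by
    intro s _; split <;> simp
  rw [sum_congr rfl this, Finset.sum_ite_eq' (range n) 0 (fun s => u (k - (s : ℕ)))]
  simp [hn1]
  omega

/-! ### The Beta integral on `(0, ∞)` -/

lemma betaReal {p q : ℝ} (hp : 0 < p) (hq : 0 < q) :
    ∫ x in Ioo (0:ℝ) 1, x ^ (p - 1) * (1 - x) ^ (q - 1)
      = Real.Gamma p * Real.Gamma q / Real.Gamma (p + q) := by
  have hc := Complex.Gamma_mul_Gamma_eq_betaIntegral
    (s := (p : ℂ)) (t := (q : ℂ)) (by simpa using hp) (by simpa using hq)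
  have hbeta : Complex.betaIntegral p q
      = ((∫ x in (0:ℝ)..1, x ^ (p - 1) * (1 - x) ^ (q - 1) : ℝ) : ℂ) := by
    rw [← intervalIntegral.integral_ofReal, Complex.betaIntegral]
    refine intervalIntegral.integral_congr fun x hx => ?_
    rw [Set.uIcc_of_le zero_le_one] at hx
    rw [Complex.ofReal_mul, Complex.ofReal_cpow hx.1, Complex.ofReal_cpow (by linarith [hx.2])]
    push_cast
    ring
  rw [hbeta, ← Complex.ofReal_add p q, Complex.Gamma_ofReal, Complex.Gamma_ofReal,
    Complex.Gamma_ofReal, ← Complex.ofReal_mul, ← Complex.ofReal_mul] at hc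
  have hre := Complex.ofReal_inj.mp hc
  have hΓ : Real.Gamma (p + q) ≠ 0 := (Real.Gamma_pos_of_pos (by linarith)).ne'
  rw [intervalIntegral.integral_of_le zero_le_one, integral_Ioc_eq_integral_Ioo] at hre
  field_simp
  rw [hre]
  ring

lemma betaRealIntegrable {p q : ℝ} (hp : 0 < p) (hq : 0 < q) :
    IntegrableOn (fun x : ℝ => x ^ (p - 1) * (1 - x) ^ (q - 1)) (Ioo (0:ℝ) 1) := by
  have hC := Complex.betaIntegral_convergent
    (u := (p : ℂ)) (v := (q : ℂ)) (by simpa using hp) (by simpa using hq)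
  rw [intervalIntegrable_iff_integrableOn_Ioc_of_le zero_le_one] at hC
  have hre := hC.re
  refine (IntegrableOn.mono_set hre Ioo_subset_Ioc_self).congr_fun (fun x hx => ?_)
    measurableSet_Ioo
  have h1 : ((x : ℂ) ^ ((p : ℂ) - 1) * (1 - (x : ℂ)) ^ ((q : ℂ) - 1))
      = ((x ^ (p - 1) * (1 - x) ^ (q - 1) : ℝ) : ℂ) := by
    rw [Complex.ofReal_mul, Complex.ofReal_cpow hx.1.le, Complex.ofReal_cpow (by linarith [hx.2])]
    push_cast
    ring
  simp [h1]

lemma image_eq : (fun u : ℝ => u / (1 - u)) '' Ioo 0 1 = Ioi (0:ℝ) := by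
  ext ω
  constructor
  · rintro ⟨u, ⟨hu0, hu1⟩, rfl⟩
    exact div_pos hu0 (by linarith)
  · intro hω
    rw [Set.mem_Ioi] at hω
    refine ⟨ω / (1 + ω), ⟨div_pos hω (by linarith), by rw [div_lt_one (by linarith)]; linarith⟩, ?_⟩
    have h1 : (1 : ℝ) - ω / (1 + ω) = 1 / (1 + ω) := by field_simp; ring
    show ω / (1 + ω) / (1 - ω / (1 + ω)) = ω
    rw [h1]
    rw [div_div_div_eq]
    field_simp

lemma hasDeriv (u : ℝ) (hu : u ∈ Ioo (0:ℝ) 1) :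
    HasDerivWithinAt (fun u : ℝ => u / (1 - u)) (((1 - u) ^ 2)⁻¹) (Ioo 0 1) u := by
  have hne : (1 : ℝ) - u ≠ 0 := by
    have := hu.2; intro h; simp only [Set.mem_Ioo] at hu; linarith [sub_eq_zero.mp h]
  have h := (hasDerivAt_id u).div ((hasDerivAt_const u 1).sub (hasDerivAt_id u)) hne
  have hval : (1 * (1 - u) - u * (0 - 1)) / (1 - u) ^ 2 = ((1 - u) ^ 2)⁻¹ := by
    field_simp; ring
  have h2 : HasDerivAt (fun u : ℝ => u / (1 - u)) ((1 * (1 - u) - u * (0 - 1)) / (1 - u) ^ 2) u := h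
  rw [hval] at h2; exact h2.hasDerivWithinAt

lemma injOn : InjOn (fun u : ℝ => u / (1 - u)) (Ioo 0 1) := by
  intro u hu v hv h
  simp only [Set.mem_Ioo] at hu hv
  have h1 : (1:ℝ) - u ≠ 0 := by linarith [hu.2]
  have h2 : (1:ℝ) - v ≠ 0 := by linarith [hv.2]
  field_simp at h
  linarith [h]

lemma pointwise {α : ℝ} (m : ℕ) (u : ℝ) (hu : u ∈ Ioo (0:ℝ) 1) :
    |((1 - u) ^ 2)⁻¹| • ((u / (1 - u)) ^ (-α) * (((1 + u / (1 - u))⁻¹) ^ (m + 1)))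
      = u ^ ((1 - α) - 1) * (1 - u) ^ (((m : ℝ) + α) - 1) := by
  obtain ⟨hu0, hu1⟩ := hu
  have h1u : (0:ℝ) < 1 - u := by linarith
  have e2 : (1 : ℝ) + u / (1 - u) = (1 - u)⁻¹ := by field_simp; ring
  rw [smul_eq_mul, abs_of_pos (by positivity), e2, inv_inv,
    Real.div_rpow hu0.le h1u.le, div_eq_mul_inv, Real.rpow_neg h1u.le, inv_inv]
  rw [show ((1 - u) ^ 2)⁻¹ = (1 - u) ^ (-2 : ℝ) by
    rw [← Real.rpow_two, ← Real.rpow_neg h1u.le]]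
  rw [show (1 - u) ^ (m + 1) = (1 - u) ^ ((m : ℝ) + 1) by
    rw [← Real.rpow_natCast (1 - u) (m + 1)]; push_cast; ring_nf]
  rw [show u ^ ((1 - α) - 1) = u ^ (-α) by ring_nf]
  have hx : (1 - u) ^ (-2:ℝ) * ((1 - u) ^ α * (1 - u) ^ ((m:ℝ) + 1))
      = (1 - u) ^ ((m:ℝ) + α - 1) := by
    rw [← Real.rpow_add h1u, ← Real.rpow_add h1u]
    congr 1
    ring
  linear_combination u ^ (-α) * hx

lemma integral_G {α : ℝ} (hα0 : 0 < α) (hα1 : α < 1) (m : ℕ) :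
    ∫ ω in Ioi (0:ℝ), ω ^ (-α) * ((1 + ω)⁻¹) ^ (m + 1)
      = Real.Gamma (1 - α) * Real.Gamma ((m : ℝ) + α) / Real.Gamma ((m : ℝ) + 1) := by
  rw [← image_eq, integral_image_eq_integral_abs_deriv_smul measurableSet_Ioo hasDeriv injOn]
  rw [setIntegral_congr_fun measurableSet_Ioo (fun u hu => pointwise m u hu)]
  rw [betaReal (by linarith) (by positivity)]
  congr 2
  ring

lemma integrable_G {α : ℝ} (hα0 : 0 < α) (hα1 : α < 1) (m : ℕ) :
    IntegrableOn (fun ω : ℝ => ω ^ (-α) * ((1 + ω)⁻¹) ^ (m + 1)) (Ioi (0:ℝ)) := by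
  rw [← image_eq, integrableOn_image_iff_integrableOn_abs_deriv_smul
    measurableSet_Ioo hasDeriv injOn]
  exact (betaRealIntegrable (by linarith) (by positivity : (0:ℝ) < (m : ℝ) + α)).congr_fun
    (fun u hu => (pointwise m u hu).symm) measurableSet_Ioo

lemma coeff {α : ℝ} (hα0 : 0 < α) (hα1 : α < 1) (m : ℕ) :
    Real.sin (α * Real.pi) / Real.pi
      * (Real.Gamma (1 - α) * Real.Gamma ((m : ℝ) + α) / Real.Gamma ((m : ℝ) + 1))
      = d α m := by
  have h1 : Real.Gamma α * Real.Gamma (1 - α) = Real.pi / Real.sin (Real.pi * α) :=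
    Real.Gamma_mul_Gamma_one_sub α
  rw [show Real.pi * α = α * Real.pi from mul_comm _ _] at h1
  have hspos : 0 < Real.sin (α * Real.pi) :=
    Real.sin_pos_of_pos_of_lt_pi (by positivity)
      (by nlinarith [Real.pi_pos])
  have hs : Real.sin (α * Real.pi) ≠ 0 := hspos.ne'
  have hπ : Real.pi ≠ 0 := Real.pi_ne_zero
  have hΓα : Real.Gamma α ≠ 0 := (Real.Gamma_pos_of_pos hα0).ne'
  have hΓβ : Real.Gamma (1 - α) ≠ 0 := (Real.Gamma_pos_of_pos (by linarith)).ne'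
  have hΓm : Real.Gamma ((m : ℝ) + 1) ≠ 0 := (Gamma_nat_pos m).ne'
  have h2 : Real.Gamma α * Real.Gamma (1 - α) * Real.sin (α * Real.pi) = Real.pi := by
    rw [h1]; exact div_mul_cancel₀ _ hs
  rw [d, show α + (m : ℝ) = (m : ℝ) + α from add_comm _ _]
  field_simp
  linear_combination h2

end FDM

/-- **The frequency distributed model realizes the fractional difference equation.**
Suppose `u(k) = 0` for `k ≤ a`; for each `ω > 0` let `z(ω,·)` satisfy `z(ω,a) = 0` and
`z(ω,k) − z(ω,k−1) = −ω z(ω,k) + u(k)` for `k ≥ a+1`; and let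
`y(k) = ∫_0^∞ μ_α(ω) z(ω,k) dω` for `k ≥ a+1` with `y(a) = 0`. Then
`{}_a∇_k^{α} y(k) = u(k)` for every integer `k ≥ a+1`. -/
theorem frequency_distributed_model_realization
    (a : ℤ) (α : ℝ) (hα0 : 0 < α) (hα1 : α < 1) (u : ℤ → ℝ)
    (hu0 : ∀ k : ℤ, k ≤ a → u k = 0)
    (z : ℝ → ℤ → ℝ)
    (hz0 : ∀ ω : ℝ, 0 < ω → z ω a = 0)
    (hz : ∀ ω : ℝ, 0 < ω → ∀ k : ℤ, a + 1 ≤ k →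
      z ω k - z ω (k - 1) = -ω * z ω k + u k)
    (y : ℤ → ℝ) (hya : y a = 0)
    (hy : ∀ k : ℤ, a + 1 ≤ k →
      y k = ∫ ω in Set.Ioi (0 : ℝ),
        Real.sin (α * Real.pi) / (Real.pi * ω ^ α) * z ω k) :
    ∀ k : ℤ, a + 1 ≤ k → nablaCaputoDiff a α y k = u k := by
  -- explicit formula for `z`
  have zform : ∀ ω : ℝ, 0 < ω → ∀ n : ℕ,
      z ω (a + n) = ∑ m ∈ Finset.range n, ((1 + ω)⁻¹) ^ (m + 1) * u (a + n - m) := by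
    intro ω hω
    intro n
    induction n with
    | zero => simpa using hz0 ω hω
    | succ n IH =>
      have hK : a + 1 ≤ a + ((n + 1 : ℕ) : ℤ) := by push_cast; omega
      have hrec := hz ω hω _ hK
      have h1ω : (1 : ℝ) + ω ≠ 0 := by positivity
      have hKm1 : a + ((n + 1 : ℕ) : ℤ) - 1 = a + (n : ℕ) := by push_cast; ring
      have hsolve : z ω (a + ((n + 1 : ℕ) : ℤ))
          = (1 + ω)⁻¹ * (z ω (a + (n : ℕ)) + u (a + ((n + 1 : ℕ) : ℤ))) := by
        rw [eq_inv_mul_iff_mul_eq₀ h1ω]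
        rw [hKm1] at hrec
        linarith [hrec]
      rw [hsolve, IH,
        Finset.sum_range_succ' (fun m : ℕ => ((1 + ω)⁻¹) ^ (m + 1)
          * u (a + ((n + 1 : ℕ) : ℤ) - (m : ℕ)))]
      rw [mul_add, Finset.mul_sum]
      congr 1
      · refine Finset.sum_congr rfl fun m hm => ?_
        have harg : a + ((n + 1 : ℕ) : ℤ) - ((m + 1 : ℕ) : ℤ) = a + (n : ℕ) - (m : ℕ) := by
          push_cast; ring
        rw [harg]
        ring
      · simp
  -- `y` agrees with the fractional sum of `u` above `a`
  have yform : ∀ j : ℤ, a + 1 ≤ j → y j = nablaFracSum a α u j := by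
    intro j hj
    obtain ⟨n, hn⟩ : ∃ n : ℕ, (j - a).toNat = n := ⟨_, rfl⟩
    have hj' : j = a + (n : ℕ) := by omega
    rw [hy j hj, FDM.fracSum_def, hn]
    have hint : ∀ ω ∈ Set.Ioi (0:ℝ),
        Real.sin (α * Real.pi) / (Real.pi * ω ^ α) * z ω j
        = ∑ m ∈ Finset.range n,
            (Real.sin (α * Real.pi) / Real.pi * u (j - (m : ℕ)))
              * (ω ^ (-α) * ((1 + ω)⁻¹) ^ (m + 1)) := by
      intro ω hω
      rw [Set.mem_Ioi] at hω
      have hωα : (0:ℝ) < ω ^ α := Real.rpow_pos_of_pos hω α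
      rw [show z ω j = ∑ m ∈ Finset.range n, ((1 + ω)⁻¹) ^ (m + 1) * u (j - (m : ℕ)) by
        rw [hj']; exact zform ω hω n]
      rw [Finset.mul_sum]
      refine Finset.sum_congr rfl fun m hm => ?_
      rw [Real.rpow_neg hω.le]
      field_simp
    rw [MeasureTheory.setIntegral_congr_fun measurableSet_Ioi hint]
    rw [MeasureTheory.integral_finset_sum _ (fun m _ =>
      ((FDM.integrable_G hα0 hα1 m).const_mul _))]
    refine Finset.sum_congr rfl fun m hm => ?_
    rw [MeasureTheory.integral_const_mul, FDM.integral_G hα0 hα1 m]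
    rw [show Real.sin (α * Real.pi) / Real.pi * u (j - (m : ℕ))
        * (Real.Gamma (1 - α) * Real.Gamma ((m : ℝ) + α) / Real.Gamma ((m : ℝ) + 1))
      = Real.sin (α * Real.pi) / Real.pi
        * (Real.Gamma (1 - α) * Real.Gamma ((m : ℝ) + α) / Real.Gamma ((m : ℝ) + 1))
        * u (j - (m : ℕ)) from by ring]
    rw [FDM.coeff hα0 hα1 m]
  -- conclude
  intro k hk
  have hYa : nablaFracSum a α u a = 0 := by
    rw [FDM.fracSum_def]
    simp
  have hcongr : nablaCaputoDiff a α y k = nablaCaputoDiff a α (nablaFracSum a α u) k := by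
    rw [nablaCaputoDiff, nablaCaputoDiff, FDM.fracSum_def, FDM.fracSum_def]
    refine Finset.sum_congr rfl fun i hi => ?_
    rw [Finset.mem_range] at hi
    have hki : a + 1 ≤ k - (i : ℕ) := by omega
    congr 1
    have h1 : y (k - (i : ℕ)) = nablaFracSum a α u (k - (i : ℕ)) := yform _ hki
    have h2 : y (k - (i : ℕ) - 1) = nablaFracSum a α u (k - (i : ℕ) - 1) := by
      rcases eq_or_lt_of_le (show a ≤ k - (i : ℕ) - 1 by omega) with h | h
      · rw [← h, hya, hYa]
      · exact yform _ (by omega)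
    rw [h1, h2]
  rw [hcongr]
  exact FDM.caputo_fracSum a hα0 hα1 u hk
end

section
/- Let a be an integer, ω > 0 a real number, and u : ℤ → ℝ such that for every r with 0 < r < R the series ∑_{k=1}^∞ r^{k-1} |u(k+a)| converges, for some R > 0. Let z : ℤ → ℝ satisfy z(a) = 0 and z(k) − z(k−1) = −ω z(k) + u(k) for k ≥ a+1. Then for every complex s with |1−s| < min(R, 1+ω), both series ∑_{k=1}^∞ (1−s)^{k-1} z(k+a) and ∑_{k=1}^∞ (1−s)^{k-1} u(k+a) converge and ∑_{k=1}^∞ (1−s)^{k-1} z(k+a) = (1/(s+ω)) ∑_{k=1}^∞ (1−s)^{k-1} u(k+a). (The nabla-domain transfer function of the first-order frequency cell is 1/(s+ω).) -/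
open Finset

/-- **Nabla-domain transfer function of the first-order frequency cell is `1/(s+ω)`.**
If `z(a) = 0` and `z(k) − z(k−1) = −ω z(k) + u(k)` for `k ≥ a+1`, then for every complex
`s` with `|1−s| < min(R, 1+ω)` both nabla Laplace series converge and
`Z(s) = (1/(s+ω)) U(s)`. -/
theorem frequency_cell_transfer_function
    (a : ℤ) (ω : ℝ) (hω : 0 < ω) (R : ℝ) (hR : 0 < R) (u z : ℤ → ℝ)
    (hu : ∀ r : ℝ, 0 < r → r < R →
      Summable (fun k : ℕ => r ^ k * |u (a + (k : ℤ) + 1)|))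
    (hza : z a = 0)
    (hz : ∀ k : ℤ, a + 1 ≤ k → z k - z (k - 1) = -ω * z k + u k) :
    ∀ s : ℂ, ‖1 - s‖ < min R (1 + ω) →
      Summable (fun k : ℕ => (1 - s) ^ k * (z (a + (k : ℤ) + 1) : ℂ)) ∧
      Summable (fun k : ℕ => (1 - s) ^ k * (u (a + (k : ℤ) + 1) : ℂ)) ∧
      (∑' k : ℕ, (1 - s) ^ k * (z (a + (k : ℤ) + 1) : ℂ)) =
        (1 / (s + (ω : ℂ))) * ∑' k : ℕ, (1 - s) ^ k * (u (a + (k : ℤ) + 1) : ℂ) := by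
  intro s hs
  have h1ω : (0:ℝ) < 1 + ω := by linarith
  set x : ℂ := 1 - s with hxdef
  set q : ℝ := ‖1 - s‖ with hqdef
  have hq0 : 0 ≤ q := norm_nonneg _
  have hqR : q < R := lt_of_lt_of_le hs (min_le_left _ _)
  have hqω : q < 1 + ω := lt_of_lt_of_le hs (min_le_right _ _)
  set c : ℝ := (1 + ω)⁻¹ with hcdef
  have hc0 : 0 < c := inv_pos.mpr h1ω
  -- recurrence in convenient form
  have hrec : ∀ k : ℕ, (1 + ω) * z (a + (k:ℤ) + 1) = z (a + k) + u (a + (k:ℤ) + 1) := by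
    intro k
    have h := hz (a + (k:ℤ) + 1) (by omega)
    have : a + (k:ℤ) + 1 - 1 = a + k := by ring
    rw [this] at h
    linarith
  -- explicit solution formula
  have hform : ∀ k : ℕ, z (a + (k:ℤ) + 1)
      = ∑ j ∈ range (k+1), c ^ (k + 1 - j) * u (a + (j:ℤ) + 1) := by
    intro k
    induction k with
    | zero =>
        have h := hrec 0
        simp only [Nat.cast_zero, add_zero] at h
        rw [hza] at h
        have : z (a + 0 + 1) = c * u (a + 0 + 1) := by
          rw [hcdef]; field_simp; simp only [add_zero]; linarith
        simpa using this
    | succ k ih =>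
        have h := hrec (k+1)
        have e : a + ((k:ℤ)+1) = a + (k:ℤ) + 1 := by ring
        have e' : a + ((k:ℤ)+1) + 1 = a + (k:ℤ) + 1 + 1 := by ring
        push_cast [e, e'] at h ⊢
        rw [Finset.sum_range_succ]
        have e2 : k + 1 + 1 - (k+1) = 1 := by omega
        rw [e2, pow_one]
        push_cast [e']
        have hsum : ∑ j ∈ range (k+1), c ^ (k+1+1-j) * u (a+(j:ℤ)+1)
            = c * ∑ j ∈ range (k+1), c ^ (k+1-j) * u (a+(j:ℤ)+1) := by
          rw [Finset.mul_sum]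
          apply Finset.sum_congr rfl
          intro j hj
          have hjk : j ≤ k := by simpa [Nat.lt_succ_iff] using hj
          have : k+1+1-j = (k+1-j)+1 := by omega
          rw [this, pow_succ]; ring
        rw [hsum, ← ih]
        have h1 : (1+ω) ≠ 0 := ne_of_gt h1ω
        rw [hcdef]
        field_simp
        linarith
  -- bound on |z|
  have hzbound : ∀ k : ℕ, |z (a + (k:ℤ) + 1)|
      ≤ ∑ j ∈ range (k+1), c ^ (k + 1 - j) * |u (a + (j:ℤ) + 1)| := by
    intro k
    rw [hform k]
    refine (Finset.abs_sum_le_sum_abs _ _).trans ?_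
    apply Finset.sum_le_sum
    intro j _
    rw [abs_mul, abs_pow, abs_of_pos hc0]
  -- choose r between q and R
  set r : ℝ := (q + min R (1 + ω)) / 2 with hrdef
  have hr0 : 0 < r := by
    have : 0 < min R (1 + ω) := lt_min hR h1ω
    positivity
  have hqr : q < r := by
    rw [hrdef]; linarith [hs]
  have hrR : r < R := by
    have h1 : r < min R (1 + ω) := by rw [hrdef]; linarith [hs]
    exact lt_of_lt_of_le h1 (min_le_left _ _)
  have huS := hu r hr0 hrR
  -- summability of the u-series with ratio q, real absolute version
  have hUnorm : Summable (fun k : ℕ => q ^ k * |u (a + (k:ℤ) + 1)|) := by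
    refine Summable.of_nonneg_of_le (fun k => by positivity) (fun k => ?_) huS
    exact mul_le_mul_of_nonneg_right (pow_le_pow_left₀ hq0 hqr.le k) (abs_nonneg _)
  have hnormU : ∀ k : ℕ, ‖x ^ k * (u (a + (k:ℤ) + 1) : ℂ)‖ = q ^ k * |u (a + (k:ℤ) + 1)| := by
    intro k
    rw [norm_mul, norm_pow]
    simp [hxdef, hqdef]
  have hU : Summable (fun k : ℕ => x ^ k * (u (a + (k:ℤ) + 1) : ℂ)) := by
    apply Summable.of_norm
    simpa only [hnormU] using hUnorm
  -- summability of the z-series via Cauchy product bound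
  have hqc1 : q * c < 1 := by
    rw [hcdef]
    rw [mul_inv_lt_iff₀ h1ω]
    simpa using hqω
  set f : ℕ → ℝ := fun j => c * (q ^ j * |u (a + (j:ℤ) + 1)|) with hfdef
  set g : ℕ → ℝ := fun m => (q * c) ^ m with hgdef
  have hf0 : ∀ j, 0 ≤ f j := fun j => by positivity
  have hg0 : ∀ m, 0 ≤ g m := fun m => by positivity
  have hfS : Summable (fun j => ‖f j‖) := by
    apply Summable.congr (hUnorm.mul_left c)
    intro j
    rw [Real.norm_eq_abs, abs_of_nonneg (hf0 j)]
  have hgS : Summable (fun m => ‖g m‖) := by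
    apply Summable.congr (summable_geometric_of_lt_one (by positivity) hqc1)
    intro m
    rw [Real.norm_eq_abs, abs_of_nonneg (hg0 m)]
  have hconv := summable_norm_sum_mul_range_of_summable_norm hfS hgS
  have hZnorm : Summable (fun k : ℕ => q ^ k * |z (a + (k:ℤ) + 1)|) := by
    refine Summable.of_nonneg_of_le (fun k => by positivity) (fun k => ?_) hconv
    have h1 : q ^ k * |z (a + (k:ℤ) + 1)|
        ≤ ∑ j ∈ range (k+1), f j * g (k - j) := by
      calc q ^ k * |z (a + (k:ℤ) + 1)|
          ≤ q ^ k * ∑ j ∈ range (k+1), c ^ (k + 1 - j) * |u (a + (j:ℤ) + 1)| :=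
            mul_le_mul_of_nonneg_left (hzbound k) (by positivity)
        _ = ∑ j ∈ range (k+1), f j * g (k - j) := by
            rw [Finset.mul_sum]
            apply Finset.sum_congr rfl
            intro j hj
            have hjk : j ≤ k := by simpa [Nat.lt_succ_iff] using hj
            obtain ⟨m, hm⟩ : ∃ m, k = j + m := ⟨k - j, by omega⟩
            subst hm
            have e1 : j + m + 1 - j = m + 1 := by omega
            have e2 : j + m - j = m := by omega
            rw [e1, e2, hfdef, hgdef]
            simp only [pow_add, mul_pow, pow_succ]
            ring
    refine h1.trans ?_
    exact le_trans (le_abs_self _) (le_of_eq (Real.norm_eq_abs _).symm)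
  have hnormZ : ∀ k : ℕ, ‖x ^ k * (z (a + (k:ℤ) + 1) : ℂ)‖ = q ^ k * |z (a + (k:ℤ) + 1)| := by
    intro k
    rw [norm_mul, norm_pow]
    simp [hxdef, hqdef]
  have hZ : Summable (fun k : ℕ => x ^ k * (z (a + (k:ℤ) + 1) : ℂ)) := by
    apply Summable.of_norm
    simpa only [hnormZ] using hZnorm
  refine ⟨hZ, hU, ?_⟩
  -- the identity
  set Z : ℂ := ∑' k : ℕ, x ^ k * (z (a + (k:ℤ) + 1) : ℂ) with hZdef
  set U : ℂ := ∑' k : ℕ, x ^ k * (u (a + (k:ℤ) + 1) : ℂ) with hUdef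
  have hrecC : ∀ k : ℕ, ((1:ℂ) + ω) * (z (a + (k:ℤ) + 1) : ℂ)
      = (z (a + k) : ℂ) + (u (a + (k:ℤ) + 1) : ℂ) := by
    intro k
    exact_mod_cast congrArg (fun t : ℝ => (t:ℂ)) (hrec k)
  set G : ℕ → ℂ := fun k => x ^ k * (z (a + (k:ℤ)) : ℂ) with hGdef
  have hGeq : ∀ k : ℕ, G k
      = ((1:ℂ) + ω) * (x ^ k * (z (a + (k:ℤ) + 1) : ℂ)) - x ^ k * (u (a + (k:ℤ) + 1) : ℂ) := by
    intro k
    have h := hrecC k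
    rw [hGdef]
    simp only
    linear_combination (-(x ^ k)) * h
  have hGsum : Summable G :=
    (((hZ.mul_left ((1:ℂ)+ω)).sub hU).congr (fun k => (hGeq k).symm))
  have htsum1 : ∑' k, G k = ((1:ℂ) + ω) * Z - U := by
    rw [tsum_congr hGeq, Summable.tsum_sub (hZ.mul_left _) hU, tsum_mul_left]
  have htsum2 : ∑' k, G k = x * Z := by
    rw [Summable.tsum_eq_zero_add hGsum]
    have hG0 : G 0 = 0 := by
      rw [hGdef]; simp [hza]
    have hGsucc : ∀ k : ℕ, G (k + 1) = x * (x ^ k * (z (a + (k:ℤ) + 1) : ℂ)) := by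
      intro k
      rw [hGdef]
      simp only
      have : a + ((k:ℤ) + 1) = a + (k:ℤ) + 1 := by ring
      push_cast [this, pow_succ]
      ring
    rw [hG0, zero_add, tsum_congr hGsucc, tsum_mul_left]
  have hkey : (s + (ω:ℂ)) * Z = U := by
    have := htsum1.symm.trans htsum2
    have hx : (1:ℂ) + ω - x = s + ω := by rw [hxdef]; ring
    linear_combination this + Z * hxdef
  have hs0 : s + (ω:ℂ) ≠ 0 := by
    intro h
    have hxval : (1:ℂ) - s = ((1 + ω : ℝ) : ℂ) := by push_cast; linear_combination -h
    have : q = 1 + ω := by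
      rw [hqdef, hxval, Complex.norm_real, Real.norm_eq_abs, abs_of_pos h1ω]
    linarith [hqω, this.symm.le]
  field_simp
  linear_combination hkey
end

section
/- Let a be an integer and f : ℤ → ℝ be such that for every r with 0 < r < R the series ∑_{k=1}^∞ r^{k-1} |f(k+a)| converges, for some R > 0. Then for every complex s with |1−s| < min(R, 1), the series ∑_{k=1}^∞ (1−s)^{k-1} (f(k+a) − f(k+a−1)) converges and equals s · (∑_{k=1}^∞ (1−s)^{k-1} f(k+a)) − f(a). (The nabla Laplace transform of the backward difference ∇f is s F(s) − f(a).) -/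
/-- **The nabla Laplace transform of the backward difference `∇f` is `s F(s) − f(a)`.**
For every complex `s` with `|1−s| < min(R, 1)` the nabla Laplace series of
`∇f(k) = f(k) − f(k−1)` converges and equals `s F(s) − f(a)`, where
`F(s) = ∑_{k=1}^∞ (1−s)^{k-1} f(k+a)` is the nabla Laplace transform of `f` about `a`. -/
theorem nabla_laplace_of_backward_difference
    (a : ℤ) (f : ℤ → ℝ) (R : ℝ) (hR : 0 < R)
    (hf : ∀ r : ℝ, 0 < r → r < R →
      Summable (fun k : ℕ => r ^ k * |f (a + (k : ℤ) + 1)|)) :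
    ∀ s : ℂ, ‖1 - s‖ < min R 1 →
      Summable (fun k : ℕ =>
        (1 - s) ^ k * ((f (a + (k : ℤ) + 1) - f (a + (k : ℤ))) : ℂ)) ∧
      (∑' k : ℕ, (1 - s) ^ k * ((f (a + (k : ℤ) + 1) - f (a + (k : ℤ))) : ℂ)) =
        s * (∑' k : ℕ, (1 - s) ^ k * (f (a + (k : ℤ) + 1) : ℂ)) - (f a : ℂ) := by
  intro s hs
  set z : ℂ := 1 - s with hz
  have hmin : 0 < min R 1 := lt_min hR one_pos
  set r : ℝ := (‖z‖ + min R 1) / 2 with hr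
  have hrpos : 0 < r := by positivity
  have hzr : ‖z‖ < r := by
    rw [hr]; linarith
  have hrR : r < R := by
    have : r < min R 1 := by rw [hr]; linarith
    exact lt_of_lt_of_le this (min_le_left _ _)
  -- summability of g k = z^k * f(a+k+1)
  have hg : Summable (fun k : ℕ => z ^ k * ((f (a + (k : ℤ) + 1)) : ℂ)) := by
    apply Summable.of_norm
    apply Summable.of_nonneg_of_le (fun k => norm_nonneg _)
      (fun k => ?_) (hf r hrpos hrR)
    rw [norm_mul, norm_pow]
    have h1 : ‖z‖ ^ k ≤ r ^ k := by
      apply pow_le_pow_left₀ (norm_nonneg _) (le_of_lt hzr)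
    have h2 : ‖((f (a + (k : ℤ) + 1)) : ℂ)‖ = |f (a + (k : ℤ) + 1)| := by
      rw [Complex.norm_real, Real.norm_eq_abs]
    rw [h2]
    exact mul_le_mul_of_nonneg_right h1 (abs_nonneg _)
  -- summability of h k = z^k * f(a+k)
  have hshift : ∀ k : ℕ, z ^ (k + 1) * ((f (a + ((k : ℤ) + 1))) : ℂ)
      = z * (z ^ k * ((f (a + (k : ℤ) + 1)) : ℂ)) := by
    intro k
    ring_nf
  have hh : Summable (fun k : ℕ => z ^ k * ((f (a + (k : ℤ))) : ℂ)) := by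
    rw [← summable_nat_add_iff 1]
    have : (fun k : ℕ => z ^ (k + 1) * ((f (a + ((k : ℕ) + 1 : ℕ))) : ℂ))
        = fun k : ℕ => z * (z ^ k * ((f (a + (k : ℤ) + 1)) : ℂ)) := by
      funext k
      push_cast
      ring_nf
    rw [this]
    exact hg.mul_left z
  have hsum : Summable (fun k : ℕ =>
      (1 - s) ^ k * ((f (a + (k : ℤ) + 1) - f (a + (k : ℤ))) : ℂ)) := by
    have := hg.sub hh
    convert this using 2 with k
    push_cast
    rfl
    ring
  refine ⟨hsum, ?_⟩
  have htsum_h : (∑' k : ℕ, z ^ k * ((f (a + (k : ℤ))) : ℂ))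
      = (f a : ℂ) + z * (∑' k : ℕ, z ^ k * ((f (a + (k : ℤ) + 1)) : ℂ)) := by
    rw [Summable.tsum_eq_zero_add hh]
    simp only [pow_zero, one_mul]
    congr 1
    · push_cast; ring_nf
    · rw [← tsum_mul_left]
      congr 1
      funext k
      push_cast
      ring_nf
  have hsub : (∑' k : ℕ, (1 - s) ^ k * ((f (a + (k : ℤ) + 1) - f (a + (k : ℤ))) : ℂ))
      = (∑' k : ℕ, z ^ k * ((f (a + (k : ℤ) + 1)) : ℂ))
        - (∑' k : ℕ, z ^ k * ((f (a + (k : ℤ))) : ℂ)) := by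
    rw [← Summable.tsum_sub hg hh]
    congr 1
    funext k
    push_cast
    ring
  rw [hsub, htsum_h]
  ring
end
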